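/- arXiv:2411.07188 — 7 statements merged into one kernel-verified Lean document; each statement's English description precedes it below -/
import Mathlib

section
/- Let A and B be finite lists of distinct symbols that are intersection-reverse as cyclic orders. Then no three symbols appear in the same order in A and B; that is, there is no 3-element list of pairwise distinct symbols that is a subsequence of both A and B. -/
open List in
private lemma pair_asym {α : Type*} {L : List α} (h : L.Nodup) {x y : α} (hxy : x ≠ y)
    (h1 : [x, y] <+ L) (h2 : [y, x] <+ L) : False := by
  induction L with
  | nil => simp at h1
  | cons z L ih =>
    rw [List.nodup_cons] at h
    cases h1 with
    | cons _ h1 =>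
      cases h2 with
      | cons _ h2 => exact ih h.2 h1 h2
      | cons_cons _ h2 =>
        exact h.1 (h1.subset (by simp))
    | cons_cons _ h1 =>
      cases h2 with
      | cons _ h2 => exact h.1 (h2.subset (by simp))
      | cons_cons _ h2 => exact hxy rfl

open List in
private lemma split2 {α : Type*} {X Y : List α} {x y : α} (h : [x, y] <+ X ++ Y) :
    [x, y] <+ X ∨ (x ∈ X ∧ y ∈ Y) ∨ [x, y] <+ Y := by
  rcases List.sublist_append_iff.mp h with ⟨s, t, hst, hs, ht⟩
  rcases s with _ | ⟨u, _ | ⟨v, s⟩⟩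
  · simp only [List.nil_append] at hst
    subst hst
    exact Or.inr (Or.inr ht)
  · simp only [List.cons_append, List.nil_append, List.cons.injEq] at hst
    obtain ⟨rfl, rfl⟩ := hst
    exact Or.inr (Or.inl ⟨hs.subset (by simp), ht.subset (by simp)⟩)
  · simp only [List.cons_append, List.cons.injEq] at hst
    obtain ⟨rfl, rfl, hst⟩ := hst
    obtain ⟨rfl, rfl⟩ := List.append_eq_nil_iff.mp hst.symm
    exact Or.inl (by simpa using hs)

open List in
private lemma pairSplit {α : Type*} {X Y : List α} (hnd : (X ++ Y).Nodup) {x y : α}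
    (hxy : x ≠ y) (h1 : [x, y] <+ X ++ Y) (h2 : [y, x] <+ Y ++ X) : x ∈ X ∧ y ∈ Y := by
  have hdisj := List.disjoint_of_nodup_append hnd
  rw [List.nodup_append] at hnd
  rcases split2 h1 with hc | ⟨hx, hy⟩ | hc
  · rcases split2 h2 with hd | ⟨hy', hx'⟩ | hd
    · have hxX : x ∈ X := hc.subset (by simp)
      have hxY : x ∈ Y := hd.subset (by simp)
      exact absurd (hdisj hxX hxY) id
    · have hyX : y ∈ X := hc.subset (by simp)
      exact absurd (hdisj hyX hy') id
    · exact absurd (pair_asym hnd.1 hxy hc hd) id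
  · exact ⟨hx, hy⟩
  · rcases split2 h2 with hd | ⟨hy', hx'⟩ | hd
    · exact absurd (pair_asym hnd.2.1 hxy hc hd) id
    · have hxY : x ∈ Y := hc.subset (by simp)
      exact absurd (hdisj hx' hxY) id
    · have hxX : x ∈ X := hd.subset (by simp)
      have hxY : x ∈ Y := hc.subset (by simp)
      exact absurd (hdisj hxX hxY) id


/-- Three symbols appear in the same order in lists `A` and `B`:
there are pairwise distinct symbols `a, b, c` such that the list `[a, b, c]`
is a subsequence of both `A` and `B`. -/
def SameOrder3 {α : Type*} (A B : List α) : Prop :=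
  ∃ a b c : α, a ≠ b ∧ a ≠ c ∧ b ≠ c ∧ [a, b, c].Sublist A ∧ [a, b, c].Sublist B

/-- Two lists of distinct symbols `A` and `B` are intersection-reverse as cyclic
orders: the sublist of `A` consisting of the symbols that also occur in `B`
equals, up to cyclic rotation, the reversal of the sublist of `B` consisting of
the symbols that also occur in `A`. -/
def CyclicIntRev {α : Type*} [DecidableEq α] (A B : List α) : Prop :=
  (A.filter fun x => decide (x ∈ B)) ~r (B.filter fun x => decide (x ∈ A)).reverse

open List in
/-- If the lists of distinct symbols `A` and `B` are intersection-reverse as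
cyclic orders, then no three symbols appear in the same order in `A` and `B`. -/
theorem stmt_2 {α : Type*} [DecidableEq α] (A B : List α)
    (hA : A.Nodup) (hB : B.Nodup) (h : CyclicIntRev A B) :
    ¬ SameOrder3 A B := by
  unfold CyclicIntRev at h
  rw [SameOrder3]
  rintro ⟨a, b, c, hab, hac, hbc, hsA, hsB⟩
  set A' := A.filter fun x => decide (x ∈ B) with hA'
  set B' := B.filter fun x => decide (x ∈ A) with hB'
  have haB : a ∈ B := hsB.subset (by simp)
  have hbB : b ∈ B := hsB.subset (by simp)
  have hcB : c ∈ B := hsB.subset (by simp)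
  have haA : a ∈ A := hsA.subset (by simp)
  have hbA : b ∈ A := hsA.subset (by simp)
  have hcA : c ∈ A := hsA.subset (by simp)
  have h1 : [a, b, c] <+ A' := by
    have := hsA.filter (fun x => decide (x ∈ B))
    simpa [List.filter_cons, haB, hbB, hcB] using this
  have h2 : [a, b, c] <+ B' := by
    have := hsB.filter (fun x => decide (x ∈ A))
    simpa [List.filter_cons, haA, hbA, hcA] using this
  have h2' : [c, b, a] <+ B'.reverse := by
    simpa using h2.reverse
  obtain ⟨n, hn⟩ := h
  have hlen : 0 < A'.length := by
    rcases A' with _ | _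
    · simp at h1
    · simp
  set m := n % A'.length with hm
  have hmle : m ≤ A'.length := le_of_lt (Nat.mod_lt _ hlen)
  have hrot : A'.rotate n = A'.drop m ++ A'.take m := by
    rw [← List.rotate_mod, ← hm, List.rotate_eq_drop_append_take hmle]
  set X := A'.take m with hX
  set Y := A'.drop m with hY
  have hXY : X ++ Y = A' := List.take_append_drop m A'
  have hnd : (X ++ Y).Nodup := by rw [hXY]; exact hA.filter _
  have h1' : [a, b, c] <+ X ++ Y := by rw [hXY]; exact h1
  have h2'' : [c, b, a] <+ Y ++ X := by
    rw [← hrot, hn]; exact h2'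
  have hab' := pairSplit hnd hab (List.Sublist.trans (by simp) h1')
    (List.Sublist.trans (by simp) h2'')
  have hbc' := pairSplit hnd hbc (List.Sublist.trans ((List.Sublist.refl [b, c]).cons a) h1')
    (List.Sublist.trans (by simp) h2'')
  exact (List.disjoint_of_nodup_append hnd) hbc'.1 hab'.2
end

section
/- Let A^1, …, A^n be finite lists of distinct symbols from a finite symbol set, and split each A^i into its halves A^i_0 and A^i_1. Then S ≥ −(1/2) · ∑_{i=1}^n |A^i|², where S = ∑_{i ≠ j} ∑_{ε ∈ {0,1}} ∑_{(a,b)} f(A^i_ε, A^j_ε, a, b), the outer sum ranging over ordered pairs of distinct indices i ≠ j and the innermost sum over ordered pairs (a,b) of distinct symbols. -/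
/-- The first half of a list: its initial segment of length `⌈ℓ/2⌉`. -/
def half0 {α : Type*} (A : List α) : List α := A.take ((A.length + 1) / 2)

/-- The second half of a list: its final segment of length `⌊ℓ/2⌋`. -/
def half1 {α : Type*} (A : List α) : List α := A.drop ((A.length + 1) / 2)

/-- `fval B a b` is `1` if `a` occurs before `b` in `B`, `-1` if `b` occurs
before `a` in `B`, and `0` if `a` or `b` does not occur in `B`. -/
def fval {α : Type*} [DecidableEq α] (B : List α) (a b : α) : ℤ :=
  if [a, b].Sublist B then 1 else if [b, a].Sublist B then -1 else 0

/-- `fval2 B B' a b = fval B a b * fval B' a b`. -/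
def fval2 {α : Type*} [DecidableEq α] (B B' : List α) (a b : α) : ℤ :=
  fval B a b * fval B' a b

lemma aux_cauchy {I β : Type*} [Fintype I] [DecidableEq I] (Q : Finset β)
    (g : I → β → ℤ) :
    -∑ i, ∑ q ∈ Q, (g i q)^2 ≤
      ∑ p ∈ (Finset.univ : Finset I).offDiag, ∑ q ∈ Q, g p.1 q * g p.2 q := by
  have key : ∑ p ∈ (Finset.univ ×ˢ Finset.univ : Finset (I × I)),
      ∑ q ∈ Q, g p.1 q * g p.2 q = ∑ q ∈ Q, (∑ i, g i q)^2 := by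
    rw [Finset.sum_product]
    calc ∑ i, ∑ j, ∑ q ∈ Q, g i q * g j q
        = ∑ i, ∑ q ∈ Q, ∑ j, g i q * g j q :=
          Finset.sum_congr rfl (fun i _ => Finset.sum_comm)
      _ = ∑ q ∈ Q, ∑ i, ∑ j, g i q * g j q := Finset.sum_comm
      _ = ∑ q ∈ Q, (∑ i, g i q)^2 := by simp_rw [sq, Finset.sum_mul_sum]
  have hsplit : ∑ p ∈ (Finset.univ ×ˢ Finset.univ : Finset (I × I)),
      ∑ q ∈ Q, g p.1 q * g p.2 q
      = (∑ p ∈ (Finset.univ : Finset I).diag, ∑ q ∈ Q, g p.1 q * g p.2 q)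
      + ∑ p ∈ (Finset.univ : Finset I).offDiag, ∑ q ∈ Q, g p.1 q * g p.2 q := by
    rw [← Finset.diag_union_offDiag, Finset.sum_union (Finset.disjoint_diag_offDiag _)]
  have hdiag : ∑ p ∈ (Finset.univ : Finset I).diag, ∑ q ∈ Q, g p.1 q * g p.2 q
      = ∑ i, ∑ q ∈ Q, (g i q)^2 := by
    rw [Finset.sum_diag]
    simp [sq]
  have hpos : 0 ≤ ∑ q ∈ Q, (∑ i, g i q)^2 :=
    Finset.sum_nonneg fun q _ => sq_nonneg _
  linarith [key, hsplit, hdiag, hpos]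

lemma aux_count {α : Type*} [Fintype α] [DecidableEq α] (B : List α) (h : B.Nodup) :
    ∑ q ∈ (Finset.univ : Finset α).offDiag, (fval B q.1 q.2)^2
      ≤ (B.length : ℤ) * B.length - B.length := by
  have hle : ∀ q ∈ (Finset.univ : Finset α).offDiag,
      (fval B q.1 q.2)^2 ≤ if q.1 ∈ B ∧ q.2 ∈ B then (1:ℤ) else 0 := by
    intro q _
    by_cases hm : q.1 ∈ B ∧ q.2 ∈ B
    · rw [if_pos hm]; unfold fval; split_ifs <;> norm_num
    · rw [if_neg hm]
      have hz : fval B q.1 q.2 = 0 := by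
        unfold fval
        split_ifs with h1 h2
        · exact absurd ⟨h1.subset (by simp), h1.subset (by simp)⟩ hm
        · exact absurd ⟨h2.subset (by simp), h2.subset (by simp)⟩ hm
        · rfl
      rw [hz]; norm_num
  have hcalc : ∑ q ∈ (Finset.univ : Finset α).offDiag,
      (if q.1 ∈ B ∧ q.2 ∈ B then (1:ℤ) else 0)
      = ((B.length * B.length - B.length : ℕ) : ℤ) := by
    rw [Finset.sum_boole]
    congr 1
    have hfil : ((Finset.univ : Finset α).offDiag.filter
        (fun q => q.1 ∈ B ∧ q.2 ∈ B)) = B.toFinset.offDiag := by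
      ext q
      simp [Finset.mem_offDiag, Finset.mem_filter, List.mem_toFinset]
      tauto
    rw [hfil, Finset.offDiag_card, List.toFinset_card_of_nodup h]
  have hmm : B.length ≤ B.length * B.length := by nlinarith [B.length.zero_le]
  calc ∑ q ∈ (Finset.univ : Finset α).offDiag, (fval B q.1 q.2)^2
      ≤ _ := Finset.sum_le_sum hle
    _ = ((B.length * B.length - B.length : ℕ) : ℤ) := hcalc
    _ = (B.length : ℤ) * B.length - B.length := by push_cast [hmm]; ring

/-- If `A 1, …, A n` are lists of distinct symbols from a finite symbol set,
each split into halves, then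
`S = ∑_{i ≠ j} ∑_{ε ∈ {0,1}} ∑_{(a,b) distinct} f(Aᵢ_ε, Aⱼ_ε, a, b)`
satisfies `S ≥ -(1/2) ∑ i, |A i|²`. -/
theorem stmt_4 {α : Type*} [Fintype α] [DecidableEq α]
    (n : ℕ) (A : Fin n → List α) (hnd : ∀ i, (A i).Nodup) :
    (((∑ p ∈ (Finset.univ : Finset (Fin n)).offDiag,
        ((∑ q ∈ (Finset.univ : Finset α).offDiag,
            fval2 (half0 (A p.1)) (half0 (A p.2)) q.1 q.2) +
         (∑ q ∈ (Finset.univ : Finset α).offDiag,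
            fval2 (half1 (A p.1)) (half1 (A p.2)) q.1 q.2))) : ℤ) : ℝ)
      ≥ -(1 / 2 : ℝ) * ∑ i, ((A i).length : ℝ) ^ 2 := by
  set Q : Finset (α × α) := (Finset.univ : Finset α).offDiag with hQ
  set S : ℤ := ∑ p ∈ (Finset.univ : Finset (Fin n)).offDiag,
        ((∑ q ∈ Q, fval2 (half0 (A p.1)) (half0 (A p.2)) q.1 q.2) +
         (∑ q ∈ Q, fval2 (half1 (A p.1)) (half1 (A p.2)) q.1 q.2)) with hS
  have hsplit : S =
      (∑ p ∈ (Finset.univ : Finset (Fin n)).offDiag,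
        ∑ q ∈ Q, fval (half0 (A p.1)) q.1 q.2 * fval (half0 (A p.2)) q.1 q.2) +
      (∑ p ∈ (Finset.univ : Finset (Fin n)).offDiag,
        ∑ q ∈ Q, fval (half1 (A p.1)) q.1 q.2 * fval (half1 (A p.2)) q.1 q.2) := by
    rw [hS, ← Finset.sum_add_distrib]
    rfl
  have h0 := aux_cauchy Q (fun i q => fval (half0 (A i)) q.1 q.2)
  have h1 := aux_cauchy Q (fun i q => fval (half1 (A i)) q.1 q.2)
  -- per-index bound
  have hbound : ∀ i : Fin n,
      2 * ((∑ q ∈ Q, (fval (half0 (A i)) q.1 q.2)^2) +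
           (∑ q ∈ Q, (fval (half1 (A i)) q.1 q.2)^2)) ≤ ((A i).length : ℤ)^2 := by
    intro i
    have hn0 : (half0 (A i)).Nodup :=
      ((A i).take_sublist _).nodup (hnd i)
    have hn1 : (half1 (A i)).Nodup :=
      ((A i).drop_sublist _).nodup (hnd i)
    have hc0 := aux_count (half0 (A i)) hn0
    have hc1 := aux_count (half1 (A i)) hn1
    set ℓ0 := (half0 (A i)).length
    set ℓ1 := (half1 (A i)).length
    set ℓ := (A i).length with hℓ
    have hl0 : ℓ0 = min ((ℓ + 1) / 2) ℓ := by
      simp [ℓ0, half0, List.length_take, hℓ]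
    have hl1 : ℓ1 = ℓ - (ℓ + 1) / 2 := by
      simp [ℓ1, half1, List.length_drop, hℓ]
    have hsum : ℓ0 + ℓ1 = ℓ := by omega
    have hle1 : ℓ1 ≤ ℓ0 := by omega
    have hle2 : ℓ0 ≤ ℓ1 + 1 := by omega
    have key : 2 * (((ℓ0:ℤ) * ℓ0 - ℓ0) + ((ℓ1:ℤ) * ℓ1 - ℓ1)) ≤ (ℓ:ℤ)^2 := by
      have h1' : (ℓ0:ℤ) + ℓ1 = ℓ := by exact_mod_cast hsum
      have h2' : (ℓ1:ℤ) ≤ ℓ0 := by exact_mod_cast hle1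
      have h3' : (ℓ0:ℤ) ≤ ℓ1 + 1 := by exact_mod_cast hle2
      have h4' : (0:ℤ) ≤ ℓ1 := Int.ofNat_nonneg _
      nlinarith [sq_nonneg ((ℓ0:ℤ) - ℓ1)]
    linarith [hc0, hc1, key]
  have hZ : -(∑ i, ((A i).length : ℤ)^2) ≤ 2 * S := by
    have hsum0 : 2 * (∑ i, ((∑ q ∈ Q, (fval (half0 (A i)) q.1 q.2)^2) +
           (∑ q ∈ Q, (fval (half1 (A i)) q.1 q.2)^2))) ≤ ∑ i, ((A i).length : ℤ)^2 := by
      rw [Finset.mul_sum]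
      exact Finset.sum_le_sum fun i _ => hbound i
    rw [Finset.sum_add_distrib] at hsum0
    rw [hsplit]
    linarith [h0, h1, hsum0]
  have hR : ((2 * S : ℤ) : ℝ) ≥ ((-(∑ i, ((A i).length : ℤ)^2) : ℤ) : ℝ) := by
    exact_mod_cast hZ
  push_cast at hR
  linarith [hR]
end

section
/- Let B and B' be finite lists of distinct symbols such that no three symbols appear in the same order in B and B', and let k = |B ∩ B'|. Then ∑_{(a,b)} f(B, B', a, b) ≤ k, where the sum ranges over ordered pairs (a,b) of distinct symbols. Moreover, if B and B' are intersection-reverse, then ∑_{(a,b)} f(B, B', a, b) = k − k². -/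
/-- Two lists of distinct symbols are intersection-reverse if their common
elements appear in reverse order in the two lists: for any two distinct symbols
`a, b` occurring in both, `a` occurs before `b` in `B` iff `b` occurs before
`a` in `B'`. -/
def IntRev {α : Type*} (B B' : List α) : Prop :=
  ∀ a ∈ B, ∀ b ∈ B, a ≠ b → a ∈ B' → b ∈ B' →
    ([a, b].Sublist B ↔ [b, a].Sublist B')

/-- `interCard B B'` is the number of symbols occurring in both `B` and `B'`. -/
def interCard {α : Type*} [DecidableEq α] (B B' : List α) : ℕ :=
  (B.filter fun x => decide (x ∈ B')).length

namespace Stmt5Aux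
variable {α : Type*} [DecidableEq α]

lemma pair_sublist_of_indexOf_lt {l : List α} {a b : α} (ha : a ∈ l) (hb : b ∈ l)
    (h : l.idxOf a < l.idxOf b) : [a, b].Sublist l := by
  induction l with
  | nil => simp at ha
  | cons x t ih =>
    by_cases hxa : x = a
    · subst hxa
      have hbx : b ≠ x := by
        rintro rfl; simp at h
      have hbt : b ∈ t := by
        rcases List.mem_cons.mp hb with h' | h'
        · exact absurd h'.symm hbx.symm
        · exact h'
      exact (List.singleton_sublist.mpr hbt).cons₂ x
    · have hxb : x ≠ b := by
        rintro rfl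
        simp only [List.idxOf_cons_self] at h
        omega
      have hat : a ∈ t := by
        rcases List.mem_cons.mp ha with h' | h'
        · exact absurd h'.symm hxa
        · exact h'
      have hbt : b ∈ t := by
        rcases List.mem_cons.mp hb with h' | h'
        · exact absurd h'.symm hxb
        · exact h'
      have h' : t.idxOf a < t.idxOf b := by
        rw [List.idxOf_cons_ne _ hxa,
            List.idxOf_cons_ne _ hxb] at h
        omega
      exact (ih hat hbt h').cons x

lemma indexOf_lt_of_pair_sublist {l : List α} (hl : l.Nodup) {a b : α}
    (h : [a, b].Sublist l) : l.idxOf a < l.idxOf b := by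
  induction l with
  | nil => simp at h
  | cons x t ih =>
    have hnd := (List.nodup_cons.mp hl)
    rcases h with _ | @⟨_, _, _, h'⟩ | @⟨_, _, _, h'⟩
    case cons =>
      rename_i h'
      have hat : a ∈ t := h'.subset (by simp)
      have hbt : b ∈ t := h'.subset (by simp)
      have hxa : x ≠ a := fun e => hnd.1 (e ▸ hat)
      have hxb : x ≠ b := fun e => hnd.1 (e ▸ hbt)
      rw [List.idxOf_cons_ne _ hxa,
          List.idxOf_cons_ne _ hxb]
      exact Nat.succ_lt_succ (ih hnd.2 h')
    case cons_cons =>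
      rename_i h'
      have hbt : b ∈ t := h'.subset (by simp)
      have hab : a ≠ b := fun e => hnd.1 (e ▸ hbt)
      rw [List.idxOf_cons_self, List.idxOf_cons_ne _ hab]
      exact Nat.succ_pos _

lemma triple_sublist {l : List α} {a b c : α} (ha : a ∈ l) (hb : b ∈ l) (hc : c ∈ l)
    (h1 : l.idxOf a < l.idxOf b) (h2 : l.idxOf b < l.idxOf c) :
    [a, b, c].Sublist l := by
  induction l with
  | nil => simp at ha
  | cons x t ih =>
    by_cases hxa : x = a
    · subst hxa
      have hxb : x ≠ b := by rintro rfl; simp at h1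
      have hxc : x ≠ c := by
        rintro rfl; simp only [List.idxOf_cons_self] at h2; omega
      have hbt : b ∈ t := by
        rcases List.mem_cons.mp hb with h' | h'
        · exact absurd h'.symm hxb
        · exact h'
      have hct : c ∈ t := by
        rcases List.mem_cons.mp hc with h' | h'
        · exact absurd h'.symm hxc
        · exact h'
      have h2' : t.idxOf b < t.idxOf c := by
        rw [List.idxOf_cons_ne _ hxb,
            List.idxOf_cons_ne _ hxc] at h2
        omega
      exact (pair_sublist_of_indexOf_lt hbt hct h2').cons₂ x
    · have hxb : x ≠ b := by
        rintro rfl; simp only [List.idxOf_cons_self] at h1; omega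
      have hxc : x ≠ c := by
        rintro rfl; simp only [List.idxOf_cons_self] at h2; omega
      have hat : a ∈ t := by
        rcases List.mem_cons.mp ha with h' | h'
        · exact absurd h'.symm hxa
        · exact h'
      have hbt : b ∈ t := by
        rcases List.mem_cons.mp hb with h' | h'
        · exact absurd h'.symm hxb
        · exact h'
      have hct : c ∈ t := by
        rcases List.mem_cons.mp hc with h' | h'
        · exact absurd h'.symm hxc
        · exact h'
      have h1' : t.idxOf a < t.idxOf b := by
        rw [List.idxOf_cons_ne _ hxa,
            List.idxOf_cons_ne _ hxb] at h1
        omega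
      have h2' : t.idxOf b < t.idxOf c := by
        rw [List.idxOf_cons_ne _ hxb,
            List.idxOf_cons_ne _ hxc] at h2
        omega
      exact (ih hat hbt hct h1' h2').cons x


lemma fval_eq {B : List α} (hB : B.Nodup) {a b : α} (ha : a ∈ B) (hb : b ∈ B)
    (hab : a ≠ b) :
    fval B a b = if B.idxOf a < B.idxOf b then 1 else -1 := by
  have hne : B.idxOf a ≠ B.idxOf b :=
    fun e => hab ((List.idxOf_inj ha).mp e)
  by_cases h : B.idxOf a < B.idxOf b
  · rw [if_pos h, fval, if_pos (pair_sublist_of_indexOf_lt ha hb h)]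
  · have h' : B.idxOf b < B.idxOf a := by omega
    rw [if_neg h, fval,
      if_neg (fun hs => absurd (indexOf_lt_of_pair_sublist hB hs) h),
      if_pos (pair_sublist_of_indexOf_lt hb ha h')]

lemma fval_eq_zero {B : List α} {a b : α} (h : ¬(a ∈ B ∧ b ∈ B)) :
    fval B a b = 0 := by
  rw [fval, if_neg, if_neg]
  · exact fun hs => h ⟨hs.subset (by simp), hs.subset (by simp)⟩
  · exact fun hs => h ⟨hs.subset (by simp), hs.subset (by simp)⟩

end Stmt5Aux

open Stmt5Aux Finset in
/-- If `B` and `B'` are lists of distinct symbols such that no three symbols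
appear in the same order in `B` and `B'`, and `k = |B ∩ B'|`, then
`∑_{(a,b) distinct} f(B, B', a, b) ≤ k`; moreover, if `B` and `B'` are
intersection-reverse, then this sum equals `k - k²`. -/
theorem stmt_5 {α : Type*} [Fintype α] [DecidableEq α] (B B' : List α)
    (hB : B.Nodup) (hB' : B'.Nodup) (h3 : ¬ SameOrder3 B B')
    (k : ℤ) (hk : k = (interCard B B' : ℤ)) :
    (∑ q ∈ (Finset.univ : Finset α).offDiag, fval2 B B' q.1 q.2) ≤ k ∧
      (IntRev B B' →
        (∑ q ∈ (Finset.univ : Finset α).offDiag, fval2 B B' q.1 q.2) = k - k ^ 2) := by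
  classical
  set S : Finset α := B.toFinset ∩ B'.toFinset with hS
  have hmemS : ∀ x, x ∈ S ↔ x ∈ B ∧ x ∈ B' := by
    intro x; simp [hS]
  -- k = |S|
  have hkS : k = (S.card : ℤ) := by
    rw [hk]
    congr 1
    have h1 : interCard B B' = (B.filter fun x => decide (x ∈ B')).toFinset.card :=
      (List.toFinset_card_of_nodup (hB.filter _)).symm
    rw [h1]
    congr 1
    ext x
    simp [hS, List.mem_filter]
  -- the agreement predicate
  set agr : α → α → Prop := fun a b =>
    (B.idxOf a < B.idxOf b ↔ B'.idxOf a < B'.idxOf b) with hagr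
  have hidxB : ∀ a ∈ B, ∀ b ∈ B, a ≠ b → B.idxOf a ≠ B.idxOf b :=
    fun a ha b hb hab e => hab ((List.idxOf_inj ha).mp e)
  -- value of fval2 on S.offDiag
  have hval : ∀ a b : α, a ∈ S → b ∈ S → a ≠ b →
      fval2 B B' a b = if agr a b then 1 else -1 := by
    intro a b haS hbS hab
    obtain ⟨haB, haB'⟩ := (hmemS a).mp haS
    obtain ⟨hbB, hbB'⟩ := (hmemS b).mp hbS
    rw [fval2, fval_eq hB haB hbB hab, fval_eq hB' haB' hbB' hab]; simp only [hagr]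
    have h1 := hidxB a haB b hbB hab
    have h2 : B'.idxOf a ≠ B'.idxOf b :=
      fun e => hab ((List.idxOf_inj haB').mp e)
    by_cases c1 : B.idxOf a < B.idxOf b <;>
      by_cases c2 : B'.idxOf a < B'.idxOf b <;>
      simp [c1, c2] <;> omega
  -- no triangles
  have htri : ∀ a b c : α, a ∈ S → b ∈ S → c ∈ S → a ≠ b → a ≠ c → b ≠ c →
      agr a b → agr a c → agr b c → False := by
    intro a b c haS hbS hcS hab hac hbc g1 g2 g3
    obtain ⟨haB, haB'⟩ := (hmemS a).mp haS
    obtain ⟨hbB, hbB'⟩ := (hmemS b).mp hbS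
    obtain ⟨hcB, hcB'⟩ := (hmemS c).mp hcS
    apply h3
    have d1 := hidxB a haB b hbB hab
    have d2 := hidxB a haB c hcB hac
    have d3 := hidxB b hbB c hcB hbc
    have e1 : B'.idxOf a ≠ B'.idxOf b :=
      fun e => hab ((List.idxOf_inj haB').mp e)
    have e2 : B'.idxOf a ≠ B'.idxOf c :=
      fun e => hac ((List.idxOf_inj haB').mp e)
    have e3 : B'.idxOf b ≠ B'.idxOf c :=
      fun e => hbc ((List.idxOf_inj hbB').mp e)
    simp only [hagr] at g1 g2 g3
    -- pick the B-sorted order of a, b, c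
    rcases lt_trichotomy (B.idxOf a) (B.idxOf b) with o1 | o1 | o1
    · rcases lt_trichotomy (B.idxOf b) (B.idxOf c) with o2 | o2 | o2
      · exact ⟨a, b, c, hab, hac, hbc,
          triple_sublist haB hbB hcB o1 o2,
          triple_sublist haB' hbB' hcB' (by omega) (by omega)⟩
      · omega
      · rcases lt_trichotomy (B.idxOf a) (B.idxOf c) with o3 | o3 | o3
        · exact ⟨a, c, b, hac, hab, fun e => hbc e.symm,
            triple_sublist haB hcB hbB o3 o2,
            triple_sublist haB' hcB' hbB' (by omega) (by omega)⟩
        · omega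
        · exact ⟨c, a, b, fun e => hac e.symm, fun e => hbc e.symm, hab,
            triple_sublist hcB haB hbB o3 o1,
            triple_sublist hcB' haB' hbB' (by omega) (by omega)⟩
    · omega
    · rcases lt_trichotomy (B.idxOf a) (B.idxOf c) with o2 | o2 | o2
      · exact ⟨b, a, c, fun e => hab e.symm, hbc, hac,
          triple_sublist hbB haB hcB o1 o2,
          triple_sublist hbB' haB' hcB' (by omega) (by omega)⟩
      · omega
      · rcases lt_trichotomy (B.idxOf b) (B.idxOf c) with o3 | o3 | o3
        · exact ⟨b, c, a, hbc, fun e => hab e.symm, fun e => hac e.symm,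
            triple_sublist hbB hcB haB o3 o2,
            triple_sublist hbB' hcB' haB' (by omega) (by omega)⟩
        · omega
        · exact ⟨c, b, a, fun e => hbc e.symm, fun e => hac e.symm,
            fun e => hab e.symm,
            triple_sublist hcB hbB haB o3 o1,
            triple_sublist hcB' hbB' haB' (by omega) (by omega)⟩
  
  -- symmetry of agr
  have hsymm : ∀ a b : α, a ∈ S → b ∈ S → a ≠ b → agr a b → agr b a := by
    intro a b haS hbS hab g
    obtain ⟨haB, haB'⟩ := (hmemS a).mp haS
    obtain ⟨hbB, hbB'⟩ := (hmemS b).mp hbS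
    have d1 := hidxB a haB b hbB hab
    have d2 : B'.idxOf a ≠ B'.idxOf b :=
      fun e => hab ((List.idxOf_inj haB').mp e)
    simp only [hagr] at g ⊢
    omega
  set m : ℕ := S.card with hm
  -- degree
  set d : α → ℕ := fun a => ∑ b ∈ S, if a ≠ b ∧ agr a b then 1 else 0 with hd
  have hd_card : ∀ a, d a = (S.filter fun b => a ≠ b ∧ agr a b).card := by
    intro a; rw [hd]; rw [Finset.card_filter]
  -- eA : number of ordered agreeing pairs
  set eA : ℕ := (S.offDiag.filter fun q => agr q.1 q.2).card with heA
  have hfil : S.offDiag.filter (fun q => agr q.1 q.2)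
      = (S ×ˢ S).filter (fun q => q.1 ≠ q.2 ∧ agr q.1 q.2) := by
    ext q
    simp only [Finset.mem_filter, Finset.mem_offDiag, Finset.mem_product]
    tauto
  have heAd : eA = ∑ a ∈ S, d a := by
    rw [heA, hfil, Finset.card_filter, Finset.sum_product]
  -- disjoint neighborhoods
  have hdeg : ∀ a b : α, a ∈ S → b ∈ S → a ≠ b → agr a b → d a + d b ≤ m := by
    intro a b haS hbS hab g
    have hdisj : Disjoint (S.filter fun c => a ≠ c ∧ agr a c)
        (S.filter fun c => b ≠ c ∧ agr b c) := by
      rw [Finset.disjoint_left]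
      rintro c hc1 hc2
      rw [Finset.mem_filter] at hc1 hc2
      exact htri a b c haS hbS hc1.1 hab hc1.2.1 hc2.2.1 g hc1.2.2 hc2.2.2
    calc d a + d b
        = ((S.filter fun c => a ≠ c ∧ agr a c)
            ∪ (S.filter fun c => b ≠ c ∧ agr b c)).card := by
          rw [hd_card, hd_card, Finset.card_union_of_disjoint hdisj]
      _ ≤ m := Finset.card_le_card
          (Finset.union_subset (Finset.filter_subset _ _) (Finset.filter_subset _ _))
  -- Mantel-type bound: 2 * eA ≤ m * m
  have hMantel : 2 * eA ≤ m * m := by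
    rcases Nat.eq_zero_or_pos eA with h0 | hpos
    · simp [h0]
    -- 2 * ∑ d² ≤ eA * m
    have key : 2 * ∑ a ∈ S, d a * d a ≤ eA * m := by
      have hle : ∑ a ∈ S, ∑ b ∈ S, (if a ≠ b ∧ agr a b then d a + d b else 0)
          ≤ ∑ a ∈ S, ∑ b ∈ S, (if a ≠ b ∧ agr a b then m else 0) := by
        refine Finset.sum_le_sum fun a haS => Finset.sum_le_sum fun b hbS => ?_
        by_cases hP : a ≠ b ∧ agr a b
        · rw [if_pos hP, if_pos hP]; exact hdeg a b haS hbS hP.1 hP.2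
        · rw [if_neg hP, if_neg hP]
      have hrhs : ∑ a ∈ S, ∑ b ∈ S, (if a ≠ b ∧ agr a b then m else 0) = eA * m := by
        have : ∀ a b : α, (if a ≠ b ∧ agr a b then m else 0)
            = (if a ≠ b ∧ agr a b then 1 else 0) * m := by
          intro a b; split <;> simp
        simp_rw [this, ← Finset.sum_mul]
        rw [heAd]
      have hlhs : ∑ a ∈ S, ∑ b ∈ S, (if a ≠ b ∧ agr a b then d a + d b else 0)
          = 2 * ∑ a ∈ S, d a * d a := by
        have hsplit : ∀ a b : α, (if a ≠ b ∧ agr a b then d a + d b else 0)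
            = (if a ≠ b ∧ agr a b then 1 else 0) * d a
              + (if a ≠ b ∧ agr a b then 1 else 0) * d b := by
          intro a b; split <;> simp [Nat.add_comm]
        simp_rw [hsplit, Finset.sum_add_distrib]
        have h1 : ∑ a ∈ S, ∑ b ∈ S, (if a ≠ b ∧ agr a b then 1 else 0) * d a
            = ∑ a ∈ S, d a * d a := by
          refine Finset.sum_congr rfl fun a haS => ?_
          rw [← Finset.sum_mul]
        have h2 : ∑ a ∈ S, ∑ b ∈ S, (if a ≠ b ∧ agr a b then 1 else 0) * d b
            = ∑ a ∈ S, d a * d a := by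
          rw [Finset.sum_comm]
          refine Finset.sum_congr rfl fun b hbS => ?_
          have : ∑ a ∈ S, (if a ≠ b ∧ agr a b then 1 else 0) * d b
              = (∑ a ∈ S, if a ≠ b ∧ agr a b then 1 else 0) * d b := by
            rw [Finset.sum_mul]
          rw [this]
          have : (∑ a ∈ S, if a ≠ b ∧ agr a b then (1:ℕ) else 0) = d b := by
            rw [hd]
            refine Finset.sum_congr rfl fun a haS => ?_
            congr 1
            apply propext
            constructor
            · rintro ⟨hne, hg⟩; exact ⟨hne.symm, hsymm a b haS hbS hne hg⟩
            · rintro ⟨hne, hg⟩; exact ⟨hne.symm, hsymm b a hbS haS hne hg⟩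
          rw [this, Nat.mul_comm]
        rw [h1, h2]; ring
      omega
    -- Cauchy–Schwarz
    have hCS : (eA : ℤ) ^ 2 ≤ (m : ℤ) * ∑ a ∈ S, (d a : ℤ) ^ 2 := by
      have hcs := sq_sum_le_card_mul_sum_sq (s := S) (f := fun a => (d a : ℤ))
      have hcast : (eA : ℤ) = ∑ a ∈ S, (d a : ℤ) := by rw [heAd]; push_cast; rfl
      rw [hcast]
      simpa [hm] using hcs
    have key' : 2 * ∑ a ∈ S, (d a : ℤ) ^ 2 ≤ (eA : ℤ) * m := by
      have : ((2 * ∑ a ∈ S, d a * d a : ℕ) : ℤ) ≤ ((eA * m : ℕ) : ℤ) := by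
        exact_mod_cast key
      push_cast at this
      calc 2 * ∑ a ∈ S, (d a : ℤ) ^ 2 = 2 * ∑ a ∈ S, (d a : ℤ) * d a := by
            congr 1; refine Finset.sum_congr rfl fun a _ => by ring
        _ ≤ (eA : ℤ) * m := this
    have hposZ : (0 : ℤ) < eA := by exact_mod_cast hpos
    have : 2 * (eA : ℤ) ≤ (m : ℤ) * m := by nlinarith [hCS, key', hposZ]
    exact_mod_cast this
  
  -- reduce the sum to S.offDiag
  have hsub : S.offDiag ⊆ (Finset.univ : Finset α).offDiag := by
    intro q hq
    rw [Finset.mem_offDiag] at hq ⊢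
    exact ⟨Finset.mem_univ _, Finset.mem_univ _, hq.2.2⟩
  have hsum1 : (∑ q ∈ (Finset.univ : Finset α).offDiag, fval2 B B' q.1 q.2)
      = ∑ q ∈ S.offDiag, fval2 B B' q.1 q.2 := by
    refine (Finset.sum_subset hsub ?_).symm
    intro q hq hq'
    rw [Finset.mem_offDiag] at hq
    have hnot : ¬(q.1 ∈ S ∧ q.2 ∈ S) := by
      intro ⟨h1, h2⟩
      exact hq' (Finset.mem_offDiag.mpr ⟨h1, h2, hq.2.2⟩)
    rw [fval2]
    by_cases hbb : q.1 ∈ B ∧ q.2 ∈ B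
    · have : ¬(q.1 ∈ B' ∧ q.2 ∈ B') := by
        intro hbb'
        exact hnot ⟨(hmemS q.1).mpr ⟨hbb.1, hbb'.1⟩, (hmemS q.2).mpr ⟨hbb.2, hbb'.2⟩⟩
      rw [fval_eq_zero this, mul_zero]
    · rw [fval_eq_zero hbb, zero_mul]
  have hsum2 : (∑ q ∈ S.offDiag, fval2 B B' q.1 q.2)
      = ∑ q ∈ S.offDiag, (if agr q.1 q.2 then (1 : ℤ) else -1) := by
    refine Finset.sum_congr rfl fun q hq => ?_
    rw [Finset.mem_offDiag] at hq
    exact hval q.1 q.2 hq.1 hq.2.1 hq.2.2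
  have hsum3 : (∑ q ∈ S.offDiag, (if agr q.1 q.2 then (1 : ℤ) else -1))
      = 2 * (eA : ℤ) - (S.offDiag.card : ℤ) := by
    have : ∀ q : α × α, (if agr q.1 q.2 then (1 : ℤ) else -1)
        = 2 * (if agr q.1 q.2 then (1 : ℤ) else 0) - 1 := by
      intro q; split <;> norm_num
    simp_rw [this]
    rw [Finset.sum_sub_distrib, ← Finset.mul_sum, Finset.sum_boole, Finset.sum_const]
    simp [heA]
  have hoffc : ((S.offDiag.card : ℤ)) = (m : ℤ) * m - m := by
    rw [Finset.offDiag_card]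
    have hmle : m ≤ m * m := by nlinarith
    rw [Nat.cast_sub (show S.card ≤ S.card * S.card by nlinarith)]
    push_cast [Nat.cast_sub hmle]
    ring
  have htotal : (∑ q ∈ (Finset.univ : Finset α).offDiag, fval2 B B' q.1 q.2)
      = 2 * (eA : ℤ) - ((m : ℤ) * m - m) := by
    rw [hsum1, hsum2, hsum3, hoffc]
  constructor
  · have h2eA : 2 * (eA : ℤ) ≤ (m : ℤ) * m := by exact_mod_cast hMantel
    rw [htotal, hkS]
    linarith
  · intro hIR
    have heA0 : eA = 0 := by
      rw [heA, Finset.card_eq_zero, Finset.filter_eq_empty_iff]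
      intro q hq
      rw [Finset.mem_offDiag] at hq
      obtain ⟨haS, hbS, hab⟩ := hq
      obtain ⟨haB, haB'⟩ := (hmemS q.1).mp haS
      obtain ⟨hbB, hbB'⟩ := (hmemS q.2).mp hbS
      intro g
      simp only [hagr] at g
      have d1 := hidxB q.1 haB q.2 hbB hab
      rcases lt_trichotomy (B.idxOf q.1) (B.idxOf q.2) with o | o | o
      · have h1 : [q.1, q.2].Sublist B := pair_sublist_of_indexOf_lt haB hbB o
        have h2 : [q.2, q.1].Sublist B' :=
          (hIR q.1 haB q.2 hbB hab haB' hbB').mp h1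
        have := indexOf_lt_of_pair_sublist hB' h2
        omega
      · exact d1 o
      · have h1 : [q.2, q.1].Sublist B := pair_sublist_of_indexOf_lt hbB haB o
        have h2 : [q.1, q.2].Sublist B' :=
          (hIR q.2 hbB q.1 haB (Ne.symm hab) hbB' haB').mp h1
        have := indexOf_lt_of_pair_sublist hB' h2
        omega
    have hk2 : k ^ 2 = (m : ℤ) * m := by rw [hkS]; ring
    rw [htotal, heA0, hk2, hkS]
    push_cast
    ring
end

section
/- Let A and A' be finite lists of distinct symbols such that no three symbols appear in the same order in A and A', and split each into halves A_0, A_1 and A'_0, A'_1. If for some ε ∈ {0,1} the lists A_ε and A'_ε are not intersection-reverse, then A_{1−ε} and A'_{1−ε} have no common symbol. -/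
/-- The half of a list selected by `ε : Bool`: for `ε = false` the initial
segment of length `⌈ℓ/2⌉`, for `ε = true` the complementary final segment of
length `⌊ℓ/2⌋`. -/
def half {α : Type*} (ε : Bool) (A : List α) : List α :=
  if ε then A.drop ((A.length + 1) / 2) else A.take ((A.length + 1) / 2)

/-- For `a, b` both in a list, one of `[a,b]`, `[b,a]` is a sublist. -/
lemma pair_sublist {α : Type*} {a b : α} {L : List α} (ha : a ∈ L) (hb : b ∈ L)
    (hab : a ≠ b) : [a, b].Sublist L ∨ [b, a].Sublist L := by
  induction L with
  | nil => simp at ha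
  | cons c t ih =>
    rcases eq_or_ne a c with rfl | h1
    · have hbt : b ∈ t := by simpa [hab.symm] using hb
      exact Or.inl ((List.singleton_sublist.mpr hbt).cons₂ a)
    · rcases eq_or_ne b c with rfl | h2
      · have hat : a ∈ t := by simpa [h1] using ha
        exact Or.inr ((List.singleton_sublist.mpr hat).cons₂ b)
      · rcases ih (by simpa [h1] using ha) (by simpa [h2] using hb) with h | h
        · exact Or.inl (h.cons c)
        · exact Or.inr (h.cons c)

/-- In a nodup list, `[a,b]` and `[b,a]` cannot both be sublists unless `a = b`. -/
lemma no_both {α : Type*} {a b : α} {L : List α} (hL : L.Nodup)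
    (h1 : [a, b].Sublist L) (h2 : [b, a].Sublist L) : a = b := by
  induction L with
  | nil => simp at h1
  | cons c t ih =>
    rcases List.nodup_cons.mp hL with ⟨hct, htnd⟩
    rcases List.cons_sublist_cons'.mp h1 with h1' | ⟨rfl, h1'⟩
    · rcases List.cons_sublist_cons'.mp h2 with h2' | ⟨rfl, h2'⟩
      · exact ih htnd h1' h2'
      · exact absurd (h1'.subset (by simp)) hct
    · rcases List.cons_sublist_cons'.mp h2 with h2' | ⟨hba, _⟩
      · exact absurd (h2'.subset (by simp)) hct
      · exact hba.symm

lemma disj_halves {α : Type*} {A : List α} (hA : A.Nodup) {a x : α} (ε : Bool)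
    (ha : a ∈ half ε A) (hx : x ∈ half (!ε) A) : a ≠ x := by
  have hsplit : half false A ++ half true A = A := by
    simp [half, List.take_append_drop]
  rw [← hsplit] at hA
  have hd := (List.nodup_append'.mp hA).2.2
  cases ε with
  | false =>
    intro heq; subst heq
    exact hd ha (by simpa using hx)
  | true =>
    intro heq; subst heq
    exact hd (by simpa using hx) ha

lemma main_aux {α : Type*} {A A' : List α} (a b x : α) (hab : a ≠ b)
    (hA : A.Nodup) (hA' : A'.Nodup) (ε : Bool)
    (h1 : [a, b].Sublist (half ε A)) (h2 : [a, b].Sublist (half ε A'))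
    (hx : x ∈ half (!ε) A) (hx' : x ∈ half (!ε) A') : SameOrder3 A A' := by
  have hax : a ≠ x := disj_halves hA ε (h1.subset (by simp)) hx
  have hbx : b ≠ x := disj_halves hA ε (h1.subset (by simp)) hx
  have hsplit : ∀ L : List α, half false L ++ half true L = L := by
    intro L; simp [half, List.take_append_drop]
  cases ε with
  | false =>
    refine ⟨a, b, x, hab, hax, hbx, ?_, ?_⟩
    · have := h1.append (List.singleton_sublist.mpr (show x ∈ half true A by simpa using hx))
      simpa [hsplit A] using this
    · have := h2.append (List.singleton_sublist.mpr (show x ∈ half true A' by simpa using hx'))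
      simpa [hsplit A'] using this
  | true =>
    refine ⟨x, a, b, hax.symm, hbx.symm, hab, ?_, ?_⟩
    · have := (List.singleton_sublist.mpr (show x ∈ half false A by simpa using hx)).append h1
      simpa [hsplit A] using this
    · have := (List.singleton_sublist.mpr (show x ∈ half false A' by simpa using hx')).append h2
      simpa [hsplit A'] using this

/-- Let `A` and `A'` be lists of distinct symbols such that no three symbols
appear in the same order in `A` and `A'`, split into halves. If for some
`ε ∈ {0,1}` the halves `A_ε` and `A'_ε` are not intersection-reverse, then
`A_{1-ε}` and `A'_{1-ε}` have no common symbol. -/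
theorem stmt_6 {α : Type*} (A A' : List α)
    (hA : A.Nodup) (hA' : A'.Nodup) (h3 : ¬ SameOrder3 A A')
    (ε : Bool) (h : ¬ IntRev (half ε A) (half ε A')) :
    ∀ x, x ∈ half (!ε) A → x ∉ half (!ε) A' := by
  intro x hx hx'
  rw [IntRev] at h
  push_neg at h
  obtain ⟨a, ha, b, hb, hab, ha', hb', hiff⟩ := h
  have hhs : ∀ (L : List α), (half ε L).Sublist L := by
    intro L; unfold half; split
    · exact List.drop_sublist _ _
    · exact List.take_sublist _ _
  have hndA : (half ε A).Nodup := hA.sublist (hhs A)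
  have hndA' : (half ε A').Nodup := hA'.sublist (hhs A')
  rcases pair_sublist ha hb hab with h1 | h1 <;>
    rcases pair_sublist ha' hb' hab with h2 | h2
  · exact h3 (main_aux a b x hab hA hA' ε h1 h2 hx hx')
  · rcases hiff with ⟨_, hnQ⟩ | ⟨hnP, _⟩
    · exact hnQ h2
    · exact hnP h1
  · rcases hiff with ⟨hP, _⟩ | ⟨_, hQ⟩
    · exact hab (no_both hndA hP h1)
    · exact hab (no_both hndA' h2 hQ)
  · exact h3 (main_aux b a x hab.symm hA hA' ε h1 h2 hx hx')
end

section
/- Let A^1, …, A^n be finite lists of distinct symbols from a finite symbol set such that no three symbols appear in the same order in any two distinct lists A^i and A^j (i ≠ j), and split each A^i into halves A^i_0, A^i_1. Then S ≤ ∑_{i ≠ j} |A^i ∩ A^j| − ∑_{(i,j,ε) : i ≠ j, A^i_ε and A^j_ε intersection-reverse} |A^i_ε ∩ A^j_ε|², where S = ∑_{i ≠ j} ∑_{ε ∈ {0,1}} ∑_{(a,b)} f(A^i_ε, A^j_ε, a, b), all sums over pairs of indices ranging over ordered pairs i ≠ j, and the innermost sum over ordered pairs (a,b) of distinct symbols.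 -/
instance {α : Type*} [DecidableEq α] (B B' : List α) : Decidable (IntRev B B') := by
  unfold IntRev; infer_instance

section Aux
variable {α : Type*} [DecidableEq α]

lemma sublist_of_indexOf : ∀ (B : List α), B.Nodup → ∀ l : List α,
    (∀ x ∈ l, x ∈ B) → l.Pairwise (fun u v => B.idxOf u < B.idxOf v) → l.Sublist B := by
  intro B
  induction B with
  | nil =>
    intro _ l hmem _
    cases l with
    | nil => exact List.Sublist.refl _
    | cons y m => exact absurd (hmem y (by simp)) (by simp)
  | cons x t ih =>
    intro hnd l hmem hpw
    rw [List.nodup_cons] at hnd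
    cases l with
    | nil => exact List.nil_sublist _
    | cons y m =>
      have hmx : ∀ z ∈ m, z ≠ x := by
        intro z hz hzx
        have h1 := List.rel_of_pairwise_cons hpw hz
        rw [hzx, List.idxOf_cons_self] at h1
        omega
      have htrans : ∀ (l' : List α), (∀ z ∈ l', z ≠ x) →
          l'.Pairwise (fun u v => (x :: t).idxOf u < (x :: t).idxOf v) →
          l'.Pairwise (fun u v => t.idxOf u < t.idxOf v) := by
        intro l' hne hp
        refine hp.imp_of_mem ?_
        intro u v hu hv h
        rw [List.idxOf_cons_ne _ (Ne.symm (hne u hu)), List.idxOf_cons_ne _ (Ne.symm (hne v hv))] at h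
        omega
      by_cases hyx : y = x
      · subst hyx
        refine List.cons_sublist_cons.2 (ih hnd.2 m ?_ (htrans m hmx (List.Pairwise.of_cons hpw)))
        intro z hz
        rcases List.mem_cons.1 (hmem z (List.mem_cons_of_mem _ hz)) with h | h
        · exact absurd h (hmx z hz)
        · exact h
      · refine List.Sublist.cons x (ih hnd.2 (y :: m) ?_ (htrans _ ?_ hpw))
        · intro z hz
          have hzx : z ≠ x := by
            rcases List.mem_cons.1 hz with rfl | h
            · exact hyx
            · exact hmx z h
          rcases List.mem_cons.1 (hmem z hz) with h | h
          · exact absurd h hzx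
          · exact h
        · intro z hz
          rcases List.mem_cons.1 hz with rfl | h
          · exact hyx
          · exact hmx z h

lemma sublist_iff_indexOf {B : List α} (hnd : B.Nodup) (l : List α) :
    l.Sublist B ↔ (∀ x ∈ l, x ∈ B) ∧ l.Pairwise (fun u v => B.idxOf u < B.idxOf v) := by
  constructor
  · intro h
    refine ⟨fun x hx => h.subset hx, ?_⟩
    have hB : B.Pairwise (fun u v => B.idxOf u < B.idxOf v) := by
      rw [List.pairwise_iff_getElem]
      intro i j h1 h2 hij
      rw [List.Nodup.idxOf_getElem hnd, List.Nodup.idxOf_getElem hnd]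
      exact hij
    exact List.Pairwise.sublist h hB
  · rintro ⟨hmem, hpw⟩
    exact sublist_of_indexOf B hnd l hmem hpw

lemma pair_sublist_iff {B : List α} (hnd : B.Nodup) {a b : α} :
    [a, b].Sublist B ↔ a ∈ B ∧ b ∈ B ∧ B.idxOf a < B.idxOf b := by
  rw [sublist_iff_indexOf hnd]
  constructor
  · rintro ⟨hm, hp⟩
    exact ⟨hm a (by simp), hm b (by simp), List.rel_of_pairwise_cons hp (by simp)⟩
  · rintro ⟨ha, hb, h⟩
    constructor
    · intro x hx
      simp only [List.mem_cons, List.mem_singleton, List.not_mem_nil, or_false] at hx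
      rcases hx with rfl | rfl <;> assumption
    · simp [List.pairwise_cons, h]

lemma triple_sublist {B : List α} (hnd : B.Nodup) {a b c : α} (ha : a ∈ B) (hb : b ∈ B)
    (hc : c ∈ B) (h1 : B.idxOf a < B.idxOf b) (h2 : B.idxOf b < B.idxOf c) :
    [a, b, c].Sublist B := by
  rw [sublist_iff_indexOf hnd]
  constructor
  · intro x hx
    simp only [List.mem_cons, List.mem_singleton, List.not_mem_nil, or_false] at hx
    rcases hx with rfl | rfl | rfl <;> assumption
  · simp only [List.pairwise_cons, List.mem_cons, List.mem_singleton, List.not_mem_nil,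
      or_false, List.Pairwise.nil]
    constructor
    · intro y hy
      rcases hy with rfl | rfl
      · exact h1
      · exact h1.trans h2
    · exact ⟨fun y hy => by rcases hy with rfl; exact h2, by simp⟩

lemma not_both {B : List α} (hnd : B.Nodup) {a b : α}
    (h : [a, b].Sublist B ∧ [b, a].Sublist B) : False := by
  have h1 := ((pair_sublist_iff hnd).1 h.1).2.2
  have h2 := ((pair_sublist_iff hnd).1 h.2).2.2
  omega

lemma total_order {B : List α} (hnd : B.Nodup) {a b : α} (ha : a ∈ B) (hb : b ∈ B)
    (hab : a ≠ b) : [a, b].Sublist B ∨ [b, a].Sublist B := by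
  have hne : B.idxOf a ≠ B.idxOf b := fun h => hab ((List.idxOf_inj ha).1 h)
  rcases lt_or_gt_of_ne hne with h | h
  · exact Or.inl ((pair_sublist_iff hnd).2 ⟨ha, hb, h⟩)
  · exact Or.inr ((pair_sublist_iff hnd).2 ⟨hb, ha, h⟩)

end Aux

section Key
variable {α : Type*} [DecidableEq α] [Fintype α]

lemma fval_zero_left {B : List α} {a b : α} (h : a ∉ B) : fval B a b = 0 := by
  have h1 : ¬ [a, b].Sublist B := fun hs => h (hs.subset (by simp))
  have h2 : ¬ [b, a].Sublist B := fun hs => h (hs.subset (by simp))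
  rw [fval, if_neg h1, if_neg h2]

lemma fval_zero_right {B : List α} {a b : α} (h : b ∉ B) : fval B a b = 0 := by
  have h1 : ¬ [a, b].Sublist B := fun hs => h (hs.subset (by simp))
  have h2 : ¬ [b, a].Sublist B := fun hs => h (hs.subset (by simp))
  rw [fval, if_neg h1, if_neg h2]

lemma key_bound {B B' : List α} (hB : B.Nodup) (hB' : B'.Nodup)
    (h3 : ¬ SameOrder3 B B') :
    ∑ q ∈ (Finset.univ : Finset α).offDiag, fval2 B B' q.1 q.2
      ≤ (interCard B B' : ℤ) -
        (if IntRev B B' then (interCard B B' : ℤ) ^ 2 else 0) := by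
  set C : Finset α := B.toFinset.filter (fun x => x ∈ B') with hCdef
  have hmemC : ∀ x, x ∈ C ↔ x ∈ B ∧ x ∈ B' := by intro x; simp [hCdef]
  have hk : C.card = interCard B B' := by
    rw [interCard, ← List.toFinset_card_of_nodup (hB.filter _)]
    congr 1
    ext x
    simp [hCdef, List.mem_filter]
  have hrestrict : ∑ q ∈ (Finset.univ : Finset α).offDiag, fval2 B B' q.1 q.2
      = ∑ q ∈ C.offDiag, fval2 B B' q.1 q.2 := by
    refine (Finset.sum_subset ?_ ?_).symm
    · intro q hq
      rw [Finset.mem_offDiag] at hq ⊢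
      exact ⟨Finset.mem_univ _, Finset.mem_univ _, hq.2.2⟩
    · intro q hq hq'
      have hne := (Finset.mem_offDiag.1 hq).2.2
      have hzero : fval B q.1 q.2 = 0 ∨ fval B' q.1 q.2 = 0 := by
        by_contra hcon
        push_neg at hcon
        have h1 : q.1 ∈ B := by by_contra h; exact hcon.1 (fval_zero_left h)
        have h2 : q.2 ∈ B := by by_contra h; exact hcon.1 (fval_zero_right h)
        have h3' : q.1 ∈ B' := by by_contra h; exact hcon.2 (fval_zero_left h)
        have h4 : q.2 ∈ B' := by by_contra h; exact hcon.2 (fval_zero_right h)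
        exact hq' (Finset.mem_offDiag.2 ⟨(hmemC _).2 ⟨h1, h3'⟩, (hmemC _).2 ⟨h2, h4⟩, hne⟩)
      rcases hzero with h | h <;> simp [fval2, h]
  have hval : ∀ q ∈ C.offDiag, fval2 B B' q.1 q.2
      = if ([q.1, q.2].Sublist B ↔ [q.1, q.2].Sublist B') then 1 else -1 := by
    rintro ⟨a, b⟩ hq
    rw [Finset.mem_offDiag] at hq
    obtain ⟨hac, hbc, hab⟩ := hq
    obtain ⟨haB, haB'⟩ := (hmemC a).1 hac
    obtain ⟨hbB, hbB'⟩ := (hmemC b).1 hbc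
    have e1 : ∀ {L : List α}, [a, b].Sublist L → fval L a b = 1 := fun hs => by
      rw [fval, if_pos hs]
    have e2 : ∀ {L : List α}, L.Nodup → [b, a].Sublist L → fval L a b = -1 := fun h hs => by
      rw [fval, if_neg (fun hh => not_both h ⟨hh, hs⟩), if_pos hs]
    rcases total_order hB haB hbB hab with h | h <;>
      rcases total_order hB' haB' hbB' hab with g | g
    · rw [fval2, e1 h, e1 g, if_pos (iff_of_true h g)]; norm_num
    · rw [fval2, e1 h, e2 hB' g, if_neg (fun hi => not_both hB' ⟨hi.1 h, g⟩)]; norm_num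
    · rw [fval2, e2 hB h, e1 g, if_neg (fun hi => not_both hB ⟨hi.2 g, h⟩)]; norm_num
    · rw [fval2, e2 hB h, e2 hB' g,
        if_pos (iff_of_false (fun hh => not_both hB ⟨hh, h⟩) (fun hh => not_both hB' ⟨hh, g⟩))]
      norm_num
  rw [hrestrict, Finset.sum_congr rfl hval, Finset.sum_ite, Finset.sum_const, Finset.sum_const]
  set P := (C.offDiag.filter (fun q : α × α =>
      ([q.1, q.2].Sublist B ↔ [q.1, q.2].Sublist B'))).card with hPdef
  set N := (C.offDiag.filter (fun q : α × α =>
      ¬ ([q.1, q.2].Sublist B ↔ [q.1, q.2].Sublist B'))).card with hNdef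
  have hPN : P + N = C.offDiag.card := Finset.card_filter_add_card_filter_not _
  have hoff : C.offDiag.card = C.card * C.card - C.card := Finset.offDiag_card C
  have hkk : C.card ≤ C.card * C.card := by
    rcases Nat.eq_zero_or_pos C.card with h | h
    · simp [h]
    · exact Nat.le_mul_of_pos_left _ h
  simp only [nsmul_eq_mul, mul_one, mul_neg_one]
  by_cases hIR : IntRev B B'
  · rw [if_pos hIR, ← hk]
    have hP0 : P = 0 := by
      rw [hPdef, Finset.card_eq_zero, Finset.filter_eq_empty_iff]
      rintro ⟨a, b⟩ hq
      rw [Finset.mem_offDiag] at hq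
      obtain ⟨hac, hbc, hab⟩ := hq
      obtain ⟨haB, haB'⟩ := (hmemC a).1 hac
      obtain ⟨hbB, hbB'⟩ := (hmemC b).1 hbc
      intro hpq
      by_cases h : [a, b].Sublist B
      · exact not_both hB' ⟨hpq.1 h, (hIR a haB b hbB hab haB' hbB').1 h⟩
      · have h' : [b, a].Sublist B := (total_order hB haB hbB hab).resolve_left h
        exact h ((hIR b hbB a haB (Ne.symm hab) hbB' haB').1 h' |> hpq.2)
    have hNval : N = C.card * C.card - C.card := by omega
    rw [hP0, hNval]
    push_cast [Nat.cast_sub hkk]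
    ring_nf
    nlinarith [hkk]
  · rw [if_neg hIR, sub_zero, ← hk]
    have h2P : 2 * (P : ℤ) ≤ (C.card : ℤ) * C.card := by
      set Out := C.filter (fun a => ∃ b, a ≠ b ∧ [a, b].Sublist B ∧ [a, b].Sublist B') with hOut
      set Inn := C.filter (fun b => ∃ a, a ≠ b ∧ [a, b].Sublist B ∧ [a, b].Sublist B') with hInn
      set T := C.offDiag.filter (fun q : α × α =>
          [q.1, q.2].Sublist B ∧ [q.1, q.2].Sublist B') with hT
      have hTsub : T ⊆ Out ×ˢ Inn := by
        rintro ⟨a, b⟩ hq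
        rw [hT, Finset.mem_filter, Finset.mem_offDiag] at hq
        obtain ⟨⟨ha, hb, hab⟩, h1, h2⟩ := hq
        rw [Finset.mem_product]
        exact ⟨Finset.mem_filter.2 ⟨ha, b, hab, h1, h2⟩,
          Finset.mem_filter.2 ⟨hb, a, hab, h1, h2⟩⟩
      have hPsub : C.offDiag.filter (fun q : α × α =>
          ([q.1, q.2].Sublist B ↔ [q.1, q.2].Sublist B')) ⊆ T ∪ T.image Prod.swap := by
        rintro ⟨a, b⟩ hq
        rw [Finset.mem_filter, Finset.mem_offDiag] at hq
        obtain ⟨⟨hac, hbc, hab⟩, hpq⟩ := hq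
        obtain ⟨haB, haB'⟩ := (hmemC a).1 hac
        obtain ⟨hbB, hbB'⟩ := (hmemC b).1 hbc
        rcases total_order hB haB hbB hab with h | h
        · exact Finset.mem_union_left _ (Finset.mem_filter.2
            ⟨Finset.mem_offDiag.2 ⟨hac, hbc, hab⟩, h, hpq.1 h⟩)
        · have hnab : ¬ [a, b].Sublist B := fun hh => not_both hB ⟨hh, h⟩
          have hnab' : ¬ [a, b].Sublist B' := fun hh => hnab (hpq.2 hh)
          have h' : [b, a].Sublist B' :=
            (total_order hB' hbB' haB' (Ne.symm hab)).resolve_right hnab'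
          refine Finset.mem_union_right _ (Finset.mem_image.2 ⟨(b, a), ?_, rfl⟩)
          exact Finset.mem_filter.2 ⟨Finset.mem_offDiag.2 ⟨hbc, hac, Ne.symm hab⟩, h, h'⟩
      have hdisj : Disjoint Out Inn := by
        rw [Finset.disjoint_left]
        intro a haO haI
        rw [hOut, Finset.mem_filter] at haO
        rw [hInn, Finset.mem_filter] at haI
        obtain ⟨haC, b, hab, h1, h2⟩ := haO
        obtain ⟨-, c, hca, g1, g2⟩ := haI
        have hcb : c ≠ b := by rintro rfl; exact not_both hB ⟨h1, g1⟩
        obtain ⟨haB, hbB, hiab⟩ := (pair_sublist_iff hB).1 h1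
        obtain ⟨hcB, -, hica⟩ := (pair_sublist_iff hB).1 g1
        obtain ⟨haB', hbB', hiab'⟩ := (pair_sublist_iff hB').1 h2
        obtain ⟨hcB', -, hica'⟩ := (pair_sublist_iff hB').1 g2
        exact h3 ⟨c, a, b, hca, hcb, hab,
          triple_sublist hB hcB haB hbB hica hiab,
          triple_sublist hB' hcB' haB' hbB' hica' hiab'⟩
      have hc1 : P ≤ 2 * T.card := by
        refine (Finset.card_le_card hPsub).trans ((Finset.card_union_le _ _).trans ?_)
        have := Finset.card_image_le (s := T) (f := Prod.swap)
        omega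
      have hc2 : T.card ≤ Out.card * Inn.card := by
        simpa [Finset.card_product] using Finset.card_le_card hTsub
      have hc3 : Out.card + Inn.card ≤ C.card := by
        rw [← Finset.card_union_of_disjoint hdisj]
        exact Finset.card_le_card (Finset.union_subset
          (Finset.filter_subset _ _) (Finset.filter_subset _ _))
      have hc1' : (P : ℤ) ≤ 2 * T.card := by exact_mod_cast hc1
      have hc2' : (T.card : ℤ) ≤ (Out.card : ℤ) * Inn.card := by exact_mod_cast hc2
      have hc3' : (Out.card : ℤ) + Inn.card ≤ C.card := by exact_mod_cast hc3
      nlinarith [sq_nonneg ((Out.card : ℤ) - Inn.card), hc1', hc2', hc3',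
        Int.natCast_nonneg Out.card, Int.natCast_nonneg Inn.card]
    have hPN' : (P : ℤ) + N = (C.card : ℤ) * C.card - C.card := by
      rw [hoff] at hPN
      zify [hkk] at hPN
      exact hPN
    linarith [h2P, hPN']

end Key

lemma interCard_halves {α : Type*} [DecidableEq α] (X Y : List α) :
    interCard (half0 X) (half0 Y) + interCard (half1 X) (half1 Y) ≤ interCard X Y := by
  have hsplit : interCard X Y = interCard (half0 X) Y + interCard (half1 X) Y := by
    unfold interCard half0 half1
    conv_lhs => rw [← List.take_append_drop ((X.length + 1) / 2) X]
    rw [List.filter_append, List.length_append]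
  have h0 : interCard (half0 X) (half0 Y) ≤ interCard (half0 X) Y := by
    apply List.Sublist.length_le
    apply List.monotone_filter_right
    intro x hx
    simp only [decide_eq_true_eq] at hx ⊢
    exact (List.take_sublist _ _).subset hx
  have h1 : interCard (half1 X) (half1 Y) ≤ interCard (half1 X) Y := by
    apply List.Sublist.length_le
    apply List.monotone_filter_right
    intro x hx
    simp only [decide_eq_true_eq] at hx ⊢
    exact (List.drop_sublist _ _).subset hx
  omega

/-- If `A 1, …, A n` are lists of distinct symbols from a finite symbol set such
that no three symbols appear in the same order in any two distinct lists, each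
split into halves, then
`S ≤ ∑_{i ≠ j} |Aᵢ ∩ Aⱼ| - ∑_{(i,j,ε) : i ≠ j, Aᵢ_ε, Aⱼ_ε int-rev} |Aᵢ_ε ∩ Aⱼ_ε|²`,
where `S = ∑_{i ≠ j} ∑_{ε ∈ {0,1}} ∑_{(a,b) distinct} f(Aᵢ_ε, Aⱼ_ε, a, b)`. -/
theorem stmt_9 {α : Type*} [Fintype α] [DecidableEq α]
    (n : ℕ) (A : Fin n → List α) (hnd : ∀ i, (A i).Nodup)
    (h3 : ∀ i j, i ≠ j → ¬ SameOrder3 (A i) (A j)) :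
    (∑ p ∈ (Finset.univ : Finset (Fin n)).offDiag,
        ((∑ q ∈ (Finset.univ : Finset α).offDiag,
            fval2 (half0 (A p.1)) (half0 (A p.2)) q.1 q.2) +
         (∑ q ∈ (Finset.univ : Finset α).offDiag,
            fval2 (half1 (A p.1)) (half1 (A p.2)) q.1 q.2)))
      ≤ (∑ p ∈ (Finset.univ : Finset (Fin n)).offDiag,
            (interCard (A p.1) (A p.2) : ℤ))
        - (∑ p ∈ (Finset.univ : Finset (Fin n)).offDiag,
            ((if IntRev (half0 (A p.1)) (half0 (A p.2)) then
                (interCard (half0 (A p.1)) (half0 (A p.2)) : ℤ) ^ 2 else 0) +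
             (if IntRev (half1 (A p.1)) (half1 (A p.2)) then
                (interCard (half1 (A p.1)) (half1 (A p.2)) : ℤ) ^ 2 else 0))) := by
  classical
  rw [← Finset.sum_sub_distrib]
  apply Finset.sum_le_sum
  rintro ⟨i, j⟩ hp
  have hij : i ≠ j := (Finset.mem_offDiag.1 hp).2.2
  have hs0 : ¬ SameOrder3 (half0 (A i)) (half0 (A j)) := by
    rintro ⟨a, b, c, h1, h2, h3', s1, s2⟩
    exact h3 i j hij ⟨a, b, c, h1, h2, h3',
      s1.trans (List.take_sublist _ _), s2.trans (List.take_sublist _ _)⟩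
  have hs1 : ¬ SameOrder3 (half1 (A i)) (half1 (A j)) := by
    rintro ⟨a, b, c, h1, h2, h3', s1, s2⟩
    exact h3 i j hij ⟨a, b, c, h1, h2, h3',
      s1.trans (List.drop_sublist _ _), s2.trans (List.drop_sublist _ _)⟩
  have key0 := key_bound (α := α) ((hnd i).sublist (List.take_sublist _ _))
    ((hnd j).sublist (List.take_sublist _ _)) hs0
  have key1 := key_bound (α := α) ((hnd i).sublist (List.drop_sublist _ _))
    ((hnd j).sublist (List.drop_sublist _ _)) hs1
  have hCC : (interCard (half0 (A i)) (half0 (A j)) : ℤ)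
      + (interCard (half1 (A i)) (half1 (A j)) : ℤ) ≤ (interCard (A i) (A j) : ℤ) := by
    exact_mod_cast interCard_halves (A i) (A j)
  simp only [half0, half1] at key0 key1 hCC ⊢
  exact (add_le_add key0 key1).trans (by rw [sub_add_sub_comm]; exact sub_le_sub_right hCC _)
end

section
/- Let G be an edge-ordered graph. Suppose there exist distinct vertices u, v and pairwise distinct vertices x₁, x₂, x₃, each adjacent to both u and v, such that in the edge-order ux₁ < ux₂ < ux₃ and vx₁ < vx₂ < vx₃. Then G contains C4^{1243}. -/
/-- An edge-ordered graph: a simple graph together with a linear order on its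
edge set, encoded by a real-valued labelling of `Sym2 V` that is injective on
the edge set. -/
structure EdgeOrderedGraph (V : Type*) where
  graph : SimpleGraph V
  ord : Sym2 V → ℝ
  injOn : Set.InjOn ord graph.edgeSet

/-- The edge-ordered graph `G` contains the edge-ordered graph `H`: there is an
injective map on vertices sending edges of `H` to edges of `G` such that the
induced map on edges is strictly order-preserving. -/
def EOContains {V W : Type*} (G : EdgeOrderedGraph V) (H : EdgeOrderedGraph W) : Prop :=
  ∃ f : W → V, Function.Injective f ∧
    (∀ e ∈ H.graph.edgeSet, e.map f ∈ G.graph.edgeSet) ∧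
    ∀ e₁ ∈ H.graph.edgeSet, ∀ e₂ ∈ H.graph.edgeSet,
      H.ord e₁ < H.ord e₂ → G.ord (e₁.map f) < G.ord (e₂.map f)

/-- The four-cycle on the vertices `0, 1, 2, 3` (in this cyclic order). -/
def C4graph : SimpleGraph (Fin 4) where
  Adj u v := v = u + 1 ∨ u = v + 1
  symm := ⟨fun _ _ h => h.symm⟩
  loopless := ⟨by intro u; fin_cases u <;> decide⟩

/-- The edge-labelling giving the edge-order `01 < 12 < 30 < 23` on the
four-cycle: the edge `uv` is labelled `u² + v²`, so the labels of the edges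
`01, 12, 30, 23` are `1 < 5 < 9 < 13`. -/
def C4ord : Sym2 (Fin 4) → ℝ :=
  Sym2.lift ⟨fun u v => ((u.1 ^ 2 + v.1 ^ 2 : ℕ) : ℝ), by intro u v; simp [Nat.add_comm]⟩

/-- The edge-ordered four-cycle `C₄^{1243}`: with vertices `a = 0`, `b = 1`,
`c = 2`, `d = 3`, its edges are ordered `ab < bc < da < cd`. -/
def C4_1243 : EdgeOrderedGraph (Fin 4) where
  graph := C4graph
  ord := C4ord
  injOn := by
    have key : ∀ u v u' v' : Fin 4, (v = u + 1 ∨ u = v + 1) → (v' = u' + 1 ∨ u' = v' + 1) →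
        u.1 ^ 2 + v.1 ^ 2 = u'.1 ^ 2 + v'.1 ^ 2 → s(u, v) = s(u', v') := by decide
    intro e he e' he' h
    revert he he' h
    induction e using Sym2.ind with
    | _ u v =>
      induction e' using Sym2.ind with
      | _ u' v' =>
        intro he he' h
        rw [SimpleGraph.mem_edgeSet] at he he'
        refine key u v u' v' he he' ?_
        simp only [C4ord, Sym2.lift_mk] at h
        exact_mod_cast h

lemma c4_edges : ∀ x y : Fin 4, (y = x + 1 ∨ x = y + 1) →
    s(x,y) = s(0,1) ∨ s(x,y) = s(1,2) ∨ s(x,y) = s(2,3) ∨ s(x,y) = s(3,0) := by decide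

lemma aux_c4 {V : Type*} (G : EdgeOrderedGraph V) (a b c d : V)
    (hac : a ≠ c) (hbd : b ≠ d)
    (hab : G.graph.Adj a b) (hbc : G.graph.Adj b c)
    (hcd : G.graph.Adj c d) (hda : G.graph.Adj d a)
    (h1 : G.ord s(a,b) < G.ord s(b,c))
    (h2 : G.ord s(b,c) < G.ord s(d,a))
    (h3 : G.ord s(d,a) < G.ord s(c,d)) :
    EOContains G C4_1243 := by
  have nab := hab.ne
  have nbc := hbc.ne
  have ncd := hcd.ne
  have nda := hda.ne
  have hinj : Function.Injective ![a,b,c,d] := by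
    intro i j hij
    fin_cases i <;> fin_cases j <;> simp_all
  have m01 : Sym2.map ![a,b,c,d] s((0:Fin 4),1) = s(a,b) := by simp [Sym2.map_pair_eq]
  have m12 : Sym2.map ![a,b,c,d] s((1:Fin 4),2) = s(b,c) := by simp [Sym2.map_pair_eq]
  have m23 : Sym2.map ![a,b,c,d] s((2:Fin 4),3) = s(c,d) := by simp [Sym2.map_pair_eq]
  have m30 : Sym2.map ![a,b,c,d] s((3:Fin 4),0) = s(d,a) := by simp [Sym2.map_pair_eq]
  have o01 : C4ord s((0:Fin 4),1) = 1 := by norm_num [C4ord]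
  have o12 : C4ord s((1:Fin 4),2) = 5 := by norm_num [C4ord]
  have o23 : C4ord s((2:Fin 4),3) = 13 := by norm_num [C4ord, show ((3:Fin 4):ℕ) = 3 from rfl]
  have o30 : C4ord s((3:Fin 4),0) = 9 := by norm_num [C4ord, show ((3:Fin 4):ℕ) = 3 from rfl]
  have hmem : ∀ e ∈ C4_1243.graph.edgeSet,
      e = s((0:Fin 4),1) ∨ e = s((1:Fin 4),2) ∨ e = s((2:Fin 4),3) ∨ e = s((3:Fin 4),0) := by
    intro e he
    induction e using Sym2.ind with
    | _ x y => exact c4_edges x y he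
  refine ⟨![a,b,c,d], hinj, ?_, ?_⟩
  · intro e he
    rcases hmem e he with h | h | h | h <;> subst h <;>
      simp only [m01, m12, m23, m30, SimpleGraph.mem_edgeSet] <;>
      first | exact hab | exact hbc | exact hcd | exact hda
  · intro e₁ he₁ e₂ he₂ hlt
    have eq1243 : C4_1243.ord = C4ord := rfl
    rw [eq1243] at hlt
    rcases hmem e₁ he₁ with h | h | h | h <;> subst h <;>
      rcases hmem e₂ he₂ with h | h | h | h <;> subst h <;>
      simp only [eq1243, o01, o12, o23, o30] at hlt <;>
      (simp only [m01, m12, m23, m30]; linarith [hlt])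

/-- Let `G` be an edge-ordered graph with distinct vertices `u, v` and pairwise
distinct vertices `x₁, x₂, x₃`, each adjacent to both `u` and `v`, such that
`ux₁ < ux₂ < ux₃` and `vx₁ < vx₂ < vx₃` in the edge-order. Then `G` contains
`C₄^{1243}`. -/
theorem stmt_12 {V : Type*} [Fintype V] (G : EdgeOrderedGraph V)
    (u v x₁ x₂ x₃ : V) (huv : u ≠ v)
    (h12 : x₁ ≠ x₂) (h13 : x₁ ≠ x₃) (h23 : x₂ ≠ x₃)
    (hu1 : G.graph.Adj u x₁) (hu2 : G.graph.Adj u x₂) (hu3 : G.graph.Adj u x₃)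
    (hv1 : G.graph.Adj v x₁) (hv2 : G.graph.Adj v x₂) (hv3 : G.graph.Adj v x₃)
    (hu12 : G.ord s(u, x₁) < G.ord s(u, x₂)) (hu23 : G.ord s(u, x₂) < G.ord s(u, x₃))
    (hv12 : G.ord s(v, x₁) < G.ord s(v, x₂)) (hv23 : G.ord s(v, x₂) < G.ord s(v, x₃)) :
    EOContains G C4_1243 := by
  have w1u : G.ord s(x₁,u) = G.ord s(u,x₁) := by rw [Sym2.eq_swap]
  have w2u : G.ord s(x₂,u) = G.ord s(u,x₂) := by rw [Sym2.eq_swap]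
  have w3u : G.ord s(x₃,u) = G.ord s(u,x₃) := by rw [Sym2.eq_swap]
  have w1v : G.ord s(x₁,v) = G.ord s(v,x₁) := by rw [Sym2.eq_swap]
  have w2v : G.ord s(x₂,v) = G.ord s(v,x₂) := by rw [Sym2.eq_swap]
  have w3v : G.ord s(x₃,v) = G.ord s(v,x₃) := by rw [Sym2.eq_swap]
  have key : ∀ y z : V, G.graph.Adj u y → G.graph.Adj v z → G.graph.Adj u z →
      G.ord s(u,y) ≠ G.ord s(v,z) := by
    intro y z hy hz hz' heq
    have hedge : s(u,y) = s(v,z) :=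
      G.injOn (G.graph.mem_edgeSet.2 hy) (G.graph.mem_edgeSet.2 hz) heq
    rw [Sym2.eq_iff] at hedge
    rcases hedge with ⟨h, _⟩ | ⟨h, _⟩
    · exact huv h
    · exact hz'.ne h
  have n11 := (key x₁ x₁ hu1 hv1 hu1).lt_or_gt
  have n22 := (key x₂ x₂ hu2 hv2 hu2).lt_or_gt
  have n33 := (key x₃ x₃ hu3 hv3 hu3).lt_or_gt
  have n31 := (key x₃ x₁ hu3 hv1 hu1).lt_or_gt
  have n21 := (key x₂ x₁ hu2 hv1 hu1).lt_or_gt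
  have n23 := (key x₂ x₃ hu2 hv3 hu3).lt_or_gt
  have n13 := (key x₁ x₃ hu1 hv3 hu3).lt_or_gt
  have n12 := (key x₁ x₂ hu1 hv2 hu2).lt_or_gt
  have n32 := (key x₃ x₂ hu3 hv2 hu2).lt_or_gt
  rcases n11 with hA1B1 | hB1A1
  · rcases n33 with hA3B3 | hB3A3
    · rcases n31 with hA3B1 | hB1A3
      · -- A1 < A3 < B1 < B3, cycle (x₁,u,x₃,v)
        exact aux_c4 G x₁ u x₃ v h13 huv hu1.symm hu3 hv3.symm hv1
          (by linarith [w1u, w2u, w3u, w1v, w2v, w3v])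
          (by linarith [w1u, w2u, w3u, w1v, w2v, w3v])
          (by linarith [w1u, w2u, w3u, w1v, w2v, w3v])
      · -- A1 < B1 < A3 < B3, cycle (u,x₁,v,x₃)
        exact aux_c4 G u x₁ v x₃ huv h13 hu1 hv1.symm hv3 hu3.symm
          (by linarith [w1u, w2u, w3u, w1v, w2v, w3v])
          (by linarith [w1u, w2u, w3u, w1v, w2v, w3v])
          (by linarith [w1u, w2u, w3u, w1v, w2v, w3v])
    · rcases n22 with hA2B2 | hB2A2
      · rcases n21 with hA2B1 | hB1A2
        · -- A1 < A2 < B1 < B2, cycle (x₁,u,x₂,v)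
          exact aux_c4 G x₁ u x₂ v h12 huv hu1.symm hu2 hv2.symm hv1
            (by linarith [w1u, w2u, w3u, w1v, w2v, w3v])
            (by linarith [w1u, w2u, w3u, w1v, w2v, w3v])
            (by linarith [w1u, w2u, w3u, w1v, w2v, w3v])
        · -- A1 < B1 < A2 < B2, cycle (u,x₁,v,x₂)
          exact aux_c4 G u x₁ v x₂ huv h12 hu1 hv1.symm hv2 hu2.symm
            (by linarith [w1u, w2u, w3u, w1v, w2v, w3v])
            (by linarith [w1u, w2u, w3u, w1v, w2v, w3v])
            (by linarith [w1u, w2u, w3u, w1v, w2v, w3v])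
      · rcases n23 with hA2B3 | hB3A2
        · -- B2 < A2 < B3 < A3, cycle (v,x₂,u,x₃)
          exact aux_c4 G v x₂ u x₃ huv.symm h23 hv2 hu2.symm hu3 hv3.symm
            (by linarith [w1u, w2u, w3u, w1v, w2v, w3v])
            (by linarith [w1u, w2u, w3u, w1v, w2v, w3v])
            (by linarith [w1u, w2u, w3u, w1v, w2v, w3v])
        · -- B2 < B3 < A2 < A3, cycle (x₂,v,x₃,u)
          exact aux_c4 G x₂ v x₃ u h23 huv.symm hv2.symm hv3 hu3.symm hu2
            (by linarith [w1u, w2u, w3u, w1v, w2v, w3v])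
            (by linarith [w1u, w2u, w3u, w1v, w2v, w3v])
            (by linarith [w1u, w2u, w3u, w1v, w2v, w3v])
  · rcases n33 with hA3B3 | hB3A3
    · rcases n22 with hA2B2 | hB2A2
      · rcases n32 with hA3B2 | hB2A3
        · -- A2 < A3 < B2 < B3, cycle (x₂,u,x₃,v)
          exact aux_c4 G x₂ u x₃ v h23 huv hu2.symm hu3 hv3.symm hv2
            (by linarith [w1u, w2u, w3u, w1v, w2v, w3v])
            (by linarith [w1u, w2u, w3u, w1v, w2v, w3v])
            (by linarith [w1u, w2u, w3u, w1v, w2v, w3v])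
        · -- A2 < B2 < A3 < B3, cycle (u,x₂,v,x₃)
          exact aux_c4 G u x₂ v x₃ huv h23 hu2 hv2.symm hv3 hu3.symm
            (by linarith [w1u, w2u, w3u, w1v, w2v, w3v])
            (by linarith [w1u, w2u, w3u, w1v, w2v, w3v])
            (by linarith [w1u, w2u, w3u, w1v, w2v, w3v])
      · rcases n12 with hA1B2 | hB2A1
        · -- B1 < A1 < B2 < A2, cycle (v,x₁,u,x₂)
          exact aux_c4 G v x₁ u x₂ huv.symm h12 hv1 hu1.symm hu2 hv2.symm
            (by linarith [w1u, w2u, w3u, w1v, w2v, w3v])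
            (by linarith [w1u, w2u, w3u, w1v, w2v, w3v])
            (by linarith [w1u, w2u, w3u, w1v, w2v, w3v])
        · -- B1 < B2 < A1 < A2, cycle (x₁,v,x₂,u)
          exact aux_c4 G x₁ v x₂ u h12 huv.symm hv1.symm hv2 hu2.symm hu1
            (by linarith [w1u, w2u, w3u, w1v, w2v, w3v])
            (by linarith [w1u, w2u, w3u, w1v, w2v, w3v])
            (by linarith [w1u, w2u, w3u, w1v, w2v, w3v])
    · rcases n13 with hA1B3 | hB3A1
      · -- B1 < A1 < B3 < A3, cycle (v,x₁,u,x₃)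
        exact aux_c4 G v x₁ u x₃ huv.symm h13 hv1 hu1.symm hu3 hv3.symm
          (by linarith [w1u, w2u, w3u, w1v, w2v, w3v])
          (by linarith [w1u, w2u, w3u, w1v, w2v, w3v])
          (by linarith [w1u, w2u, w3u, w1v, w2v, w3v])
      · -- B1 < B3 < A1 < A3, cycle (x₁,v,x₃,u)
        exact aux_c4 G x₁ v x₃ u h13 huv.symm hv1.symm hv3 hu3.symm hu1
          (by linarith [w1u, w2u, w3u, w1v, w2v, w3v])
          (by linarith [w1u, w2u, w3u, w1v, w2v, w3v])
          (by linarith [w1u, w2u, w3u, w1v, w2v, w3v])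
end

section
/- Let A be a zero-one matrix with no all-zero column, such that A contains the hat pattern and every pair of consecutive rows of A has a common column in which both rows have a 1-entry. Then for every positive integer n, ex_<(2n, G(A)) ≥ Ex(n, A). -/
/-- `exEO n H` is the maximum number of edges in an edge-ordered graph on `n`
vertices avoiding `H`. -/
noncomputable def exEO (n : ℕ) {W : Type*} (H : EdgeOrderedGraph W) : ℕ :=
  sSup {m | ∃ G : EdgeOrderedGraph (Fin n), ¬ EOContains G H ∧ Nat.card G.graph.edgeSet = m}

/-- The zero-one matrix `M` contains the zero-one matrix `P`: there are strictly
increasing maps of the row indices and of the column indices of `P` into those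
of `M` mapping every `1`-entry of `P` to a `1`-entry of `M`. -/
def MatContains {r c r' c' : ℕ} (M : Fin r' → Fin c' → Bool)
    (P : Fin r → Fin c → Bool) : Prop :=
  ∃ (f : Fin r → Fin r') (g : Fin c → Fin c'), StrictMono f ∧ StrictMono g ∧
    ∀ i j, P i j = true → M (f i) (g j) = true

/-- The weight of a zero-one matrix: its number of `1`-entries. -/
def matWeight {r c : ℕ} (M : Fin r → Fin c → Bool) : ℕ :=
  (Finset.univ.filter fun p : Fin r × Fin c => M p.1 p.2 = true).card

/-- `ExM n P` is the maximum weight of an `n × n` zero-one matrix avoiding `P`. -/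
noncomputable def ExM (n : ℕ) {r c : ℕ} (P : Fin r → Fin c → Bool) : ℕ :=
  sSup {w | ∃ M : Fin n → Fin n → Bool, ¬ MatContains M P ∧ matWeight M = w}

/-- The hat pattern, with rows `(0,1,0)` and `(1,0,1)`. -/
def hatPattern : Fin 2 → Fin 3 → Bool :=
  ![![false, true, false], ![true, false, true]]

/-- The adjacency relation of the bipartite graph of the zero-one matrix `A`:
row `i` is adjacent to column `j` exactly when `A i j = 1`. -/
def biAdj {r c : ℕ} (A : Fin r → Fin c → Bool) :
    (Fin r ⊕ Fin c) → (Fin r ⊕ Fin c) → Prop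
  | Sum.inl i, Sum.inr j => A i j = true
  | Sum.inr j, Sum.inl i => A i j = true
  | _, _ => False

/-- The lexicographic edge label of the edge joining row `i` and column `j`:
edges are ordered first by column index, then by row index. -/
def lexv (r : ℕ) {c : ℕ} : (Fin r ⊕ Fin c) → (Fin r ⊕ Fin c) → ℝ
  | Sum.inl i, Sum.inr j => ((j.1 * r + i.1 : ℕ) : ℝ)
  | Sum.inr j, Sum.inl i => ((j.1 * r + i.1 : ℕ) : ℝ)
  | _, _ => 0

/-- `G(A)`: the edge-ordered bipartite graph of the zero-one matrix `A`, whose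
vertices are the rows and the columns of `A`, with row `i` adjacent to column
`j` exactly when `A i j = 1`, and whose edges are ordered lexicographically
(first by column, then by row). -/
def GA {r c : ℕ} (A : Fin r → Fin c → Bool) : EdgeOrderedGraph (Fin r ⊕ Fin c) where
  graph :=
    { Adj := biAdj A
      symm := ⟨by rintro (i | j) (i' | j') h <;> exact h⟩
      loopless := ⟨by rintro (i | j) h <;> exact h⟩ }
  ord := Sym2.lift ⟨lexv r, by rintro (i | j) (i' | j') <;> rfl⟩
  injOn := by
    have key : ∀ (i i' : Fin r) (j j' : Fin c),
        j.1 * r + i.1 = j'.1 * r + i'.1 → i = i' ∧ j = j' := by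
      intro i i' j j' hn
      have hr : 0 < r := i.pos
      have hi : i.1 = i'.1 := by
        have h1 : (j.1 * r + i.1) % r = i.1 := by
          rw [Nat.mul_comm, Nat.mul_add_mod]; exact Nat.mod_eq_of_lt i.isLt
        have h2 : (j'.1 * r + i'.1) % r = i'.1 := by
          rw [Nat.mul_comm, Nat.mul_add_mod]; exact Nat.mod_eq_of_lt i'.isLt
        rw [← h1, ← h2, hn]
      have hj : j.1 = j'.1 := by
        rw [hi] at hn
        exact Nat.eq_of_mul_eq_mul_right hr (Nat.add_right_cancel hn)
      exact ⟨Fin.ext hi, Fin.ext hj⟩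
    intro e he e' he' h
    revert he he' h
    induction e using Sym2.ind with
    | _ u v =>
      induction e' using Sym2.ind with
      | _ u' v' =>
        intro he he' h
        rw [SimpleGraph.mem_edgeSet] at he he'
        rcases u with i | j <;> rcases v with i₂ | j₂ <;>
          rcases u' with i' | j' <;> rcases v' with i₂' | j₂' <;>
          (try exact he.elim) <;> (try exact he'.elim) <;>
          simp only [Sym2.lift_mk, lexv] at h <;>
          obtain ⟨hi, hj⟩ := key _ _ _ _ (Nat.cast_inj.mp h) <;>
          subst hi <;> subst hj <;>
          first
            | rfl
            | exact Sym2.eq_swap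


section Aux

lemma key_lt {r j j' i i' : ℕ} (hi : i < r) (h : j < j') : j * r + i < j' * r + i' := by
  have h1 : j * r + i < (j + 1) * r := by nlinarith
  have h2 : (j + 1) * r ≤ j' * r := Nat.mul_le_mul_right r h
  omega

lemma key_le {n x y a b : ℕ} (ha : a < n) (hb : b < n) (h : x * n + a < y * n + b) :
    x ≤ y := by
  by_contra hxy
  push_neg at hxy
  have h2 : (y + 1) * n ≤ x * n := Nat.mul_le_mul_right n hxy
  nlinarith

lemma finStrictMono_of_lt_succ {r : ℕ} {α : Type*} [Preorder α] (ρ : Fin r → α)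
    (h : ∀ (i : ℕ) (hi : i + 1 < r), ρ ⟨i, Nat.lt_of_succ_lt hi⟩ < ρ ⟨i + 1, hi⟩) :
    StrictMono ρ := by
  have step : ∀ (d a : ℕ) (hd : a + d + 1 < r),
      ρ ⟨a, by omega⟩ < ρ ⟨a + d + 1, hd⟩ := by
    intro d
    induction d with
    | zero => intro a hd; exact h a hd
    | succ d ih =>
      intro a hd
      exact lt_trans (ih a (by omega)) (h (a + d + 1) (by omega))
  intro a b hab
  obtain ⟨ia, hia⟩ := a
  obtain ⟨ib, hib⟩ := b
  have : ia < ib := hab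
  obtain ⟨d, rfl⟩ : ∃ d, ib = ia + d + 1 := ⟨ib - ia - 1, by omega⟩
  exact step d ia hib

lemma mem_edgeSet_comap {V W : Type*} (e : V → W) (G : SimpleGraph W) (s : Sym2 V) :
    s ∈ (G.comap e).edgeSet ↔ s.map e ∈ G.edgeSet := by
  induction s using Sym2.ind with
  | _ u v => simp [SimpleGraph.mem_edgeSet]

/-- Pull back an edge-ordered graph along an equivalence of vertex sets. -/
def pullback {V W : Type*} (e : V ≃ W) (G : EdgeOrderedGraph W) : EdgeOrderedGraph V where
  graph := G.graph.comap e
  ord s := G.ord (s.map e)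
  injOn := by
    intro s hs s' hs' h
    have hm := (mem_edgeSet_comap e G.graph s).mp hs
    have hm' := (mem_edgeSet_comap e G.graph s').mp hs'
    have := G.injOn hm hm' h
    exact Sym2.map.injective e.injective this

lemma EOContains_of_pullback {V W U : Type*} (e : V ≃ W) (G : EdgeOrderedGraph W)
    (H : EdgeOrderedGraph U) (h : EOContains (pullback e G) H) : EOContains G H := by
  obtain ⟨f, finj, fedge, ford⟩ := h
  refine ⟨e ∘ f, e.injective.comp finj, ?_, ?_⟩
  · intro s hs
    have := fedge s hs
    rw [show (pullback e G).graph = G.graph.comap e from rfl, mem_edgeSet_comap] at this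
    rwa [Sym2.map_map] at this
  · intro e₁ h₁ e₂ h₂ hlt
    have := ford e₁ h₁ e₂ h₂ hlt
    simp only [← Sym2.map_map]
    exact this

lemma card_edgeSet_pullback {V W : Type*} (e : V ≃ W) (G : EdgeOrderedGraph W) :
    Nat.card (pullback e G).graph.edgeSet = Nat.card G.graph.edgeSet := by
  have himg : (Sym2.map ⇑e) '' (pullback e G).graph.edgeSet = G.graph.edgeSet := by
    ext t
    constructor
    · rintro ⟨s, hs, rfl⟩
      exact (mem_edgeSet_comap (⇑e) G.graph s).mp hs
    · intro ht
      refine ⟨Sym2.map ⇑e.symm t, ?_, ?_⟩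
      · rw [show (pullback e G).graph = G.graph.comap e from rfl, mem_edgeSet_comap,
          Sym2.map_map]
        simpa using ht
      · rw [Sym2.map_map]
        simp
  rw [Nat.card_coe_set_eq, Nat.card_coe_set_eq, ← himg,
    Set.ncard_image_of_injective _ (Sym2.map.injective e.injective)]

end Aux

section Main

lemma memGA {r c : ℕ} (A : Fin r → Fin c → Bool) (i : Fin r) (j : Fin c)
    (h : A i j = true) : s(Sum.inl i, Sum.inr j) ∈ (GA A).graph.edgeSet :=
  (SimpleGraph.mem_edgeSet _).mpr h

lemma ordGA {r c : ℕ} (A : Fin r → Fin c → Bool) (i : Fin r) (j : Fin c) :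
    (GA A).ord s(Sum.inl i, Sum.inr j) = ((j.1 * r + i.1 : ℕ) : ℝ) := rfl

lemma ordGA' {r c : ℕ} (A : Fin r → Fin c → Bool) (i : Fin r) (j : Fin c) :
    (GA A).ord s(Sum.inr j, Sum.inl i) = ((j.1 * r + i.1 : ℕ) : ℝ) := rfl

lemma main_contains {r c n : ℕ} (A : Fin r → Fin c → Bool)
    (hcol : ∀ j : Fin c, ∃ i : Fin r, A i j = true)
    (hhat : MatContains A hatPattern)
    (hconsec : ∀ (i : ℕ) (h1 : i + 1 < r),
      ∃ j : Fin c, A ⟨i, Nat.lt_of_succ_lt h1⟩ j = true ∧ A ⟨i + 1, h1⟩ j = true)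
    (M : Fin n → Fin n → Bool) (h : EOContains (GA M) (GA A)) : MatContains M A := by
  obtain ⟨f, finj, fedge, ford⟩ := h
  obtain ⟨fh, gh, hfm, hgm, hmap⟩ := hhat
  have hi12 : fh 0 < fh 1 := hfm (by decide)
  have hj12 : gh 0 < gh 1 := hgm (by decide)
  have hj23 : gh 1 < gh 2 := hgm (by decide)
  have hA1 : A (fh 0) (gh 1) = true := hmap 0 1 (by decide)
  have hA2 : A (fh 1) (gh 0) = true := hmap 1 0 (by decide)
  have hA3 : A (fh 1) (gh 2) = true := hmap 1 2 (by decide)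
  have hr2 : 2 ≤ r := by
    have h1 : (fh 0).1 < (fh 1).1 := hi12
    have h2 := (fh 1).isLt
    omega
  have hr0 : 0 < r := by omega
  -- each row has a 1-entry
  have hrow : ∀ i : Fin r, ∃ j : Fin c, A i j = true := by
    intro i
    by_cases hi : i.1 + 1 < r
    · obtain ⟨j, hj, _⟩ := hconsec i.1 hi
      exact ⟨j, hj⟩
    · have h1 : 1 ≤ i.1 := by have := i.isLt; omega
      obtain ⟨j, _, hj⟩ := hconsec (i.1 - 1) (by have := i.isLt; omega)
      refine ⟨j, ?_⟩
      have : i = ⟨i.1 - 1 + 1, by have := i.isLt; omega⟩ :=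
        Fin.ext (show i.1 = i.1 - 1 + 1 by omega)
      rw [this]
      exact hj
  -- adjacent vertices are mapped to opposite sides
  have hside : ∀ (i : Fin r) (j : Fin c), A i j = true →
      (f (Sum.inl i)).isLeft = !(f (Sum.inr j)).isLeft := by
    intro i j hij
    have hadj : (GA M).graph.Adj (f (Sum.inl i)) (f (Sum.inr j)) := by
      have := fedge _ (memGA A i j hij)
      rwa [Sym2.map_pair_eq, SimpleGraph.mem_edgeSet] at this
    rcases hf1 : f (Sum.inl i) with x | x <;> rcases hf2 : f (Sum.inr j) with y | y <;>
      rw [hf1, hf2] at hadj <;> first | rfl | exact hadj.elim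
  -- all rows are mapped to the same side
  have hbrow : ∀ (i : ℕ) (hi : i < r),
      (f (Sum.inl ⟨i, hi⟩)).isLeft = (f (Sum.inl ⟨0, hr0⟩)).isLeft := by
    intro i
    induction i with
    | zero => intro hi; rfl
    | succ k ih =>
      intro hi
      obtain ⟨j, hk, hk1⟩ := hconsec k hi
      have e1 := hside ⟨k, Nat.lt_of_succ_lt hi⟩ j hk
      have e2 := hside ⟨k + 1, hi⟩ j hk1
      rw [← ih (Nat.lt_of_succ_lt hi), e2, e1]
  have hrows : ∀ i : Fin r, (f (Sum.inl i)).isLeft = (f (Sum.inl ⟨0, hr0⟩)).isLeft :=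
    fun i => hbrow i.1 i.isLt
  have hcols : ∀ j : Fin c,
      (f (Sum.inr j)).isLeft = !(f (Sum.inl ⟨0, hr0⟩)).isLeft := by
    intro j
    obtain ⟨i, hi⟩ := hcol j
    have h1 := hside i j hi
    rw [hrows i] at h1
    rw [h1, Bool.not_not]
  by_cases hb : (f (Sum.inl ⟨0, hr0⟩)).isLeft = true
  · -- rows ↦ rows, columns ↦ columns
    have hrowsL : ∀ i : Fin r, ∃ x, f (Sum.inl i) = Sum.inl x := by
      intro i
      rcases hx : f (Sum.inl i) with x | x
      · exact ⟨x, rfl⟩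
      · have := hrows i; rw [hx, hb] at this; simp at this
    have hcolsR : ∀ j : Fin c, ∃ y, f (Sum.inr j) = Sum.inr y := by
      intro j
      rcases hx : f (Sum.inr j) with y | y
      · have := hcols j; rw [hx, hb] at this; simp at this
      · exact ⟨y, rfl⟩
    choose ρ hρ using hrowsL
    choose γ hγ using hcolsR
    have hγinj : Function.Injective γ := by
      intro a b hab
      have : f (Sum.inr a) = f (Sum.inr b) := by rw [hγ a, hγ b, hab]
      exact Sum.inr.inj (finj this)
    have hM : ∀ i j, A i j = true → M (ρ i) (γ j) = true := by
      intro i j hij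
      have := fedge _ (memGA A i j hij)
      rw [Sym2.map_pair_eq, hρ i, hγ j, SimpleGraph.mem_edgeSet] at this
      exact this
    have hord : ∀ (i : Fin r) (j : Fin c) (i' : Fin r) (j' : Fin c),
        A i j = true → A i' j' = true → j.1 * r + i.1 < j'.1 * r + i'.1 →
        (γ j).1 * n + (ρ i).1 < (γ j').1 * n + (ρ i').1 := by
      intro i j i' j' hij hij' hlt
      have := ford _ (memGA A i j hij) _ (memGA A i' j' hij') (by
        rw [ordGA, ordGA]; exact_mod_cast hlt)
      rw [Sym2.map_pair_eq, Sym2.map_pair_eq, hρ i, hγ j, hρ i', hγ j',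
        ordGA, ordGA] at this
      exact_mod_cast this
    have hγmono : StrictMono γ := by
      intro j j' hjj
      obtain ⟨i, hi⟩ := hcol j
      obtain ⟨i', hi'⟩ := hcol j'
      have hlt := hord i j i' j' hi hi' (key_lt i.isLt hjj)
      have hle : (γ j).1 ≤ (γ j').1 := key_le (ρ i).isLt (ρ i').isLt hlt
      exact lt_of_le_of_ne hle (fun he => hjj.ne (hγinj he))
    have hρmono : StrictMono ρ := by
      apply finStrictMono_of_lt_succ
      intro i hi
      obtain ⟨j, h1, h2⟩ := hconsec i hi
      have := hord ⟨i, Nat.lt_of_succ_lt hi⟩ j ⟨i + 1, hi⟩ j h1 h2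
        (show j.1 * r + i < j.1 * r + (i + 1) by omega)
      simp only [Fin.lt_def]
      omega
    exact ⟨ρ, γ, hρmono, hγmono, hM⟩
  · -- rows ↦ columns, columns ↦ rows : contradiction via the hat
    exfalso
    have hb' : (f (Sum.inl ⟨0, hr0⟩)).isLeft = false := by
      cases hx : (f (Sum.inl ⟨0, hr0⟩)).isLeft
      · rfl
      · exact absurd hx hb
    have hrowsR : ∀ i : Fin r, ∃ x, f (Sum.inl i) = Sum.inr x := by
      intro i
      rcases hx : f (Sum.inl i) with x | x
      · have := hrows i; rw [hx, hb'] at this; simp at this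
      · exact ⟨x, rfl⟩
    have hcolsL : ∀ j : Fin c, ∃ y, f (Sum.inr j) = Sum.inl y := by
      intro j
      rcases hx : f (Sum.inr j) with y | y
      · exact ⟨y, rfl⟩
      · have := hcols j; rw [hx, hb'] at this; simp at this
    choose ρ hρ using hrowsR
    choose γ hγ using hcolsL
    have hordS : ∀ (i : Fin r) (j : Fin c) (i' : Fin r) (j' : Fin c),
        A i j = true → A i' j' = true → j.1 * r + i.1 < j'.1 * r + i'.1 →
        (ρ i).1 * n + (γ j).1 < (ρ i').1 * n + (γ j').1 := by
      intro i j i' j' hij hij' hlt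
      have := ford _ (memGA A i j hij) _ (memGA A i' j' hij') (by
        rw [ordGA, ordGA]; exact_mod_cast hlt)
      rw [Sym2.map_pair_eq, Sym2.map_pair_eq, hρ i, hγ j, hρ i', hγ j',
        ordGA', ordGA'] at this
      exact_mod_cast this
    have k1 := hordS (fh 1) (gh 0) (fh 0) (gh 1) hA2 hA1 (key_lt (fh 1).isLt hj12)
    have k2 := hordS (fh 0) (gh 1) (fh 1) (gh 2) hA1 hA3 (key_lt (fh 0).isLt hj23)
    have le1 : (ρ (fh 1)).1 ≤ (ρ (fh 0)).1 :=
      key_le (γ (gh 0)).isLt (γ (gh 1)).isLt k1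
    have le2 : (ρ (fh 0)).1 ≤ (ρ (fh 1)).1 :=
      key_le (γ (gh 1)).isLt (γ (gh 2)).isLt k2
    have hρeq : ρ (fh 0) = ρ (fh 1) := Fin.ext (le_antisymm le2 le1)
    have : Sum.inl (fh 0) = Sum.inl (fh 1) := finj (by rw [hρ (fh 0), hρ (fh 1), hρeq])
    exact hi12.ne (Sum.inl.inj this)

end Main

lemma card_edgeSet_GA {r c : ℕ} (A : Fin r → Fin c → Bool) :
    Nat.card (GA A).graph.edgeSet = matWeight A := by
  have hinj : Function.Injective
      (fun p : Fin r × Fin c => s(Sum.inl p.1, (Sum.inr p.2 : Fin r ⊕ Fin c))) := by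
    intro p q h
    simp only [Sym2.eq_iff] at h
    rcases h with ⟨h1, h2⟩ | ⟨h1, h2⟩
    · exact Prod.ext (Sum.inl.inj h1) (Sum.inr.inj h2)
    · exact absurd h1 (by simp)
  have himg : (fun p : Fin r × Fin c => s(Sum.inl p.1, (Sum.inr p.2 : Fin r ⊕ Fin c))) ''
      {p | A p.1 p.2 = true} = (GA A).graph.edgeSet := by
    ext t
    constructor
    · rintro ⟨p, hp, rfl⟩
      exact memGA A p.1 p.2 hp
    · induction t using Sym2.ind with
      | _ u v =>
        intro ht
        rw [SimpleGraph.mem_edgeSet] at ht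
        rcases u with i | j <;> rcases v with i' | j'
        · exact ht.elim
        · exact ⟨(i, j'), ht, rfl⟩
        · exact ⟨(i', j), ht, Sym2.eq_swap⟩
        · exact ht.elim
  rw [Nat.card_coe_set_eq, ← himg, Set.ncard_image_of_injective _ hinj,
    show {p : Fin r × Fin c | A p.1 p.2 = true} =
      ↑(Finset.univ.filter fun p : Fin r × Fin c => A p.1 p.2 = true) from by ext p; simp,
    Set.ncard_coe_finset]
  rfl

/-- Let `A` be a zero-one matrix with no all-zero column, containing the hat
pattern, and such that every pair of consecutive rows has a common column in
which both rows have a `1`-entry. Then `ex_<(2n, G(A)) ≥ Ex(n, A)` for every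
positive integer `n`. -/
theorem stmt_13 {r c : ℕ} (A : Fin r → Fin c → Bool)
    (hcol : ∀ j : Fin c, ∃ i : Fin r, A i j = true)
    (hhat : MatContains A hatPattern)
    (hconsec : ∀ (i : ℕ) (h1 : i + 1 < r),
      ∃ j : Fin c, A ⟨i, Nat.lt_of_succ_lt h1⟩ j = true ∧ A ⟨i + 1, h1⟩ j = true)
    (n : ℕ) (hn : 0 < n) :
    ExM n A ≤ exEO (2 * n) (GA A) := by
  have e : Fin (2 * n) ≃ Fin n ⊕ Fin n := (finCongr (two_mul n)).trans finSumFinEquiv.symm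
  have hAne : ∃ i j, A i j = true := by
    obtain ⟨fh, gh, _, _, hmap⟩ := hhat
    exact ⟨fh 1, gh 0, hmap 1 0 (by decide)⟩
  have hzero : ¬ MatContains (fun _ _ => false : Fin n → Fin n → Bool) A := by
    rintro ⟨ρ, γ, _, _, hm⟩
    obtain ⟨i, j, hij⟩ := hAne
    exact absurd (hm i j hij) (by simp)
  have hSne : {w | ∃ M : Fin n → Fin n → Bool, ¬ MatContains M A ∧ matWeight M = w}.Nonempty :=
    ⟨matWeight (fun _ _ => false : Fin n → Fin n → Bool), _, hzero, rfl⟩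
  have hbdd : BddAbove {m | ∃ G : EdgeOrderedGraph (Fin (2 * n)),
      ¬ EOContains G (GA A) ∧ Nat.card G.graph.edgeSet = m} := by
    refine ⟨(Set.univ : Set (Sym2 (Fin (2 * n)))).ncard, ?_⟩
    rintro m ⟨G, _, rfl⟩
    rw [Nat.card_coe_set_eq]
    exact Set.ncard_le_ncard (Set.subset_univ _) Set.finite_univ
  unfold ExM exEO
  apply csSup_le hSne
  rintro w ⟨M, hMavoid, rfl⟩
  apply le_csSup hbdd
  refine ⟨pullback e (GA M), ?_, ?_⟩
  · intro hc
    exact hMavoid (main_contains A hcol hhat hconsec M (EOContains_of_pullback e _ _ hc))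
  · rw [card_edgeSet_pullback, card_edgeSet_GA]
end
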